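/- arXiv:1505.01336 — 11 statements merged into one kernel-verified Lean document; each statement's English description precedes it below -/
import Mathlib

section
/- Assume that for some μ ∈ ℂ the restriction of L to N_μ := ker(μ − A_m) is bijective onto ∂X with continuous inverse L_μ ∈ L(∂X, X) (so L_μ takes values in N_μ and L(L_μ x) = x for all x ∈ ∂X). Let λ ∈ ρ(A) with resolvent R ∈ L(X). Then the bounded linear operator L_λ := L_μ + (μ − λ)·(R ∘ L_μ) ∈ L(∂X, X) takes its values in N_λ := ker(λ − A_m), satisfies L(L_λ x) = x for every x ∈ ∂X, and the restriction of L to N_λ is bijective onto ∂X with inverse L_λ. Moreover L_λ x = μ·R(L_μ x) − A_m(R(L_μ x)) for every x ∈ ∂X. -/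
/-- **Dirichlet operators at arbitrary resolvent points.**
Let `X`, `∂X` be complex Banach spaces, `A_m : D_m → X` a linear (maximal) operator and
`L : D_m → ∂X` a linear boundary operator.  Assume that for some `μ ∈ ℂ` the restriction of
`L` to `N_μ = ker (μ - A_m)` is bijective onto `∂X` with continuous inverse `L_μ ∈ L(∂X, X)`,
and let `λ ∈ ρ(A)` (where `A = A_m|_{ker L}`) with resolvent `R ∈ L(X)`.
Then `L_λ := L_μ + (μ - λ) (R ∘ L_μ)` takes values in `N_λ = ker (λ - A_m)`, satisfies
`L (L_λ x) = x`, the restriction of `L` to `N_λ` is bijective onto `∂X` with inverse `L_λ`,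
and `L_λ x = μ • R (L_μ x) - A_m (R (L_μ x))`. -/
theorem stmt_3 {X dX : Type*} [NormedAddCommGroup X] [NormedSpace ℂ X] [CompleteSpace X]
    [NormedAddCommGroup dX] [NormedSpace ℂ dX] [CompleteSpace dX]
    (Dm : Submodule ℂ X) (Am : Dm →ₗ[ℂ] X) (L : Dm →ₗ[ℂ] dX)
    (μ lam : ℂ) (Lμ : dX →L[ℂ] X) (R : X →L[ℂ] X)
    -- `L_μ` takes values in `N_μ = ker (μ - A_m)` :
    (hLμmem : ∀ x : dX, Lμ x ∈ Dm)
    (hLμker : ∀ x : dX, Am ⟨Lμ x, hLμmem x⟩ = μ • Lμ x)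
    -- `L_μ` is a right inverse of `L|_{N_μ}` :
    (hLLμ : ∀ x : dX, L ⟨Lμ x, hLμmem x⟩ = x)
    -- `L_μ` is a left inverse of `L|_{N_μ}` :
    (hμinj : ∀ y : Dm, Am y = μ • (y : X) → Lμ (L y) = (y : X))
    -- `R` is the resolvent of `A = A_m|_{ker L}` at `λ` :
    (hRmem : ∀ x : X, R x ∈ Dm)
    (hRdom : ∀ x : X, L ⟨R x, hRmem x⟩ = 0)
    (hRres : ∀ x : X, lam • R x - Am ⟨R x, hRmem x⟩ = x)
    (hRres' : ∀ y : Dm, L y = 0 → R (lam • (y : X) - Am y) = (y : X)) :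
    -- `L_λ` takes values in `N_λ = ker (λ - A_m)` :
    (∀ x : dX, (Lμ + (μ - lam) • (R ∘L Lμ)) x ∈ Dm) ∧
    (∀ x : dX, ∀ h : (Lμ + (μ - lam) • (R ∘L Lμ)) x ∈ Dm,
        Am ⟨(Lμ + (μ - lam) • (R ∘L Lμ)) x, h⟩ = lam • (Lμ + (μ - lam) • (R ∘L Lμ)) x) ∧
    -- `L_λ` is a right inverse of `L|_{N_λ}` (in particular `L|_{N_λ}` is surjective) :
    (∀ x : dX, ∀ h : (Lμ + (μ - lam) • (R ∘L Lμ)) x ∈ Dm,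
        L ⟨(Lμ + (μ - lam) • (R ∘L Lμ)) x, h⟩ = x) ∧
    -- `L_λ` is a left inverse of `L|_{N_λ}` (in particular `L|_{N_λ}` is injective) :
    (∀ y : Dm, Am y = lam • (y : X) → (Lμ + (μ - lam) • (R ∘L Lμ)) (L y) = (y : X)) ∧
    -- the alternative representation `L_λ = μ R L_μ - A_m R L_μ` :
    (∀ x : dX, (Lμ + (μ - lam) • (R ∘L Lμ)) x
        = μ • R (Lμ x) - Am ⟨R (Lμ x), hRmem (Lμ x)⟩) := by

  have key : ∀ x : dX, (Lμ + (μ - lam) • (R ∘L Lμ)) x = Lμ x + (μ - lam) • R (Lμ x) := by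
    intro x; simp
  have mem : ∀ x : dX, (Lμ + (μ - lam) • (R ∘L Lμ)) x ∈ Dm := by
    intro x; rw [key]; exact Dm.add_mem (hLμmem x) (Dm.smul_mem _ (hRmem _))
  have AmR : ∀ x : X, Am ⟨R x, hRmem x⟩ = lam • R x - x := by
    intro x
    have h := hRres x
    rw [sub_eq_iff_eq_add] at h
    rw [h]; abel
  have split : ∀ x : dX, ∀ h : (Lμ + (μ - lam) • (R ∘L Lμ)) x ∈ Dm,
      (⟨(Lμ + (μ - lam) • (R ∘L Lμ)) x, h⟩ : Dm)
        = ⟨Lμ x, hLμmem x⟩ + (μ - lam) • ⟨R (Lμ x), hRmem (Lμ x)⟩ := by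
    intro x h; ext; simp [key]
  refine ⟨mem, ?_, ?_, ?_, ?_⟩
  · intro x h
    rw [split x h, map_add, map_smul, hLμker, AmR, key]
    have : R (Lμ x) = R (Lμ x) := rfl
    module
  · intro x h
    rw [split x h, map_add, map_smul, hLLμ, hRdom, smul_zero, add_zero]
  · intro y hy
    set z : X := Lμ (L y) with hz
    have hzD : Am ⟨z, hLμmem (L y)⟩ = μ • z := hLμker (L y)
    have hmemd : z - (y : X) ∈ Dm := Dm.sub_mem (hLμmem (L y)) y.2
    have hdeq : (⟨z - (y : X), hmemd⟩ : Dm) = ⟨z, hLμmem (L y)⟩ - y := by ext; simp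
    have hLd : L (⟨z - (y : X), hmemd⟩ : Dm) = 0 := by
      rw [hdeq, map_sub, hLLμ, sub_self]
    have hAmd : Am ⟨z - (y : X), hmemd⟩ = μ • z - lam • (y : X) := by
      rw [hdeq, map_sub, hzD, hy]
    have h1 := hRres' ⟨z - (y : X), hmemd⟩ hLd
    have harg : lam • ((⟨z - (y : X), hmemd⟩ : Dm) : X) - Am ⟨z - (y : X), hmemd⟩
        = (lam - μ) • z := by
      rw [hAmd]
      show lam • (z - (y : X)) - (μ • z - lam • (y : X)) = (lam - μ) • z
      module
    rw [harg, map_smul] at h1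
    have h1' : (lam - μ) • R z = z - (y : X) := h1
    rw [key]
    have hfin : (μ - lam) • R z = (y : X) - z := by
      rw [show μ - lam = -(lam - μ) by ring, neg_smul, h1', neg_sub]
    rw [hfin]
    show z + ((y : X) - z) = (y : X)
    abel
  · intro x
    rw [key, AmR]
    module
end

section
/- Let 0 < θ' < φ ≤ π/2 and for 0 < α ≤ π/2 set Σ_α := {z ∈ ℂ \ {0} : |arg z| < α}. Then Σ_φ = ⋃_{r>0} ((r·e^{iφ} + Σ_{θ'}) ∪ (r·e^{−iφ} + Σ_{θ'})), where r·e^{±iφ} + Σ_{θ'} := {r·e^{±iφ} + w : w ∈ Σ_{θ'}}. -/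
private lemma aux_re_pos {z : ℂ} {β : ℝ} (hz : z ≠ 0) (h : |Complex.arg z| < β)
    (hβ : β ≤ Real.pi / 2) : 0 < z.re := by
  have h2 := Complex.abs_arg_lt_pi_div_two_iff.mp (lt_of_lt_of_le h hβ)
  tauto

private lemma aux_arg_iff {z : ℂ} {β : ℝ} (hre : 0 < z.re) (hβ1 : 0 < β)
    (hβ2 : β < Real.pi / 2) :
    |Complex.arg z| < β ↔ |z.im| < Real.tan β * z.re := by
  have habs : |Complex.arg z| < Real.pi / 2 :=
    Complex.abs_arg_lt_pi_div_two_iff.mpr (Or.inl hre)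
  have hmem := abs_lt.mp habs
  have ht : Real.tan (Complex.arg z) = z.im / z.re := Complex.tan_arg z
  have htabs : Real.tan |Complex.arg z| = |z.im| / z.re := by
    rcases le_or_gt 0 (Complex.arg z) with h | h
    · have htn : 0 ≤ Real.tan (Complex.arg z) :=
        Real.tan_nonneg_of_nonneg_of_le_pi_div_two h (by linarith [hmem.2])
      rw [ht] at htn
      have himn : 0 ≤ z.im := by
        have h3 := mul_nonneg htn hre.le
        rwa [div_mul_cancel₀ _ hre.ne'] at h3
      rw [abs_of_nonneg h, ht, abs_of_nonneg himn]
    · have htn : Real.tan (Complex.arg z) ≤ 0 :=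
        Real.tan_nonpos_of_nonpos_of_neg_pi_div_two_le h.le (by linarith [hmem.1])
      rw [ht] at htn
      have himn : z.im ≤ 0 := by
        have h3 := mul_nonpos_of_nonpos_of_nonneg htn hre.le
        rwa [div_mul_cancel₀ _ hre.ne'] at h3
      rw [abs_of_neg h, Real.tan_neg, ht, abs_of_nonpos himn, neg_div]
  constructor
  · intro h
    have h2 := Real.tan_lt_tan_of_nonneg_of_lt_pi_div_two (abs_nonneg _) hβ2 h
    rw [htabs, div_lt_iff₀ hre] at h2
    exact h2
  · intro h
    by_contra hc
    push_neg at hc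
    have h2 : Real.tan β ≤ Real.tan |Complex.arg z| := by
      rcases eq_or_lt_of_le hc with he | hl
      · rw [he]
      · exact (Real.tan_lt_tan_of_nonneg_of_lt_pi_div_two hβ1.le habs hl).le
    rw [htabs, le_div_iff₀ hre] at h2
    nlinarith

set_option maxHeartbeats 1000000 in
/-- **Covering the sector `Σ_φ` by translated subsectors.**
Let `0 < θ' < φ ≤ π/2` and `Σ_α = {z ∈ ℂ \ {0} : |arg z| < α}`.  Then
`Σ_φ = ⋃_{r>0} ((r e^{iφ} + Σ_{θ'}) ∪ (r e^{-iφ} + Σ_{θ'}))`. -/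
theorem stmt_7 (θ' φ : ℝ) (h1 : 0 < θ') (h2 : θ' < φ) (h3 : φ ≤ Real.pi / 2) :
    {z : ℂ | z ≠ 0 ∧ |Complex.arg z| < φ} =
      ⋃ r ∈ Set.Ioi (0 : ℝ),
        ((fun w => (r : ℂ) * Complex.exp ((φ : ℂ) * Complex.I) + w) ''
            {z : ℂ | z ≠ 0 ∧ |Complex.arg z| < θ'} ∪
          (fun w => (r : ℂ) * Complex.exp (-(φ : ℂ) * Complex.I) + w) ''
            {z : ℂ | z ≠ 0 ∧ |Complex.arg z| < θ'}) := by
  have hpi := Real.pi_pos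
  have hφpos : 0 < φ := h1.trans h2
  have hθ2 : θ' < Real.pi / 2 := lt_of_lt_of_le h2 h3
  have hsinφ : 0 < Real.sin φ := Real.sin_pos_of_pos_of_lt_pi hφpos (by linarith)
  have hcosφ : 0 ≤ Real.cos φ := Real.cos_nonneg_of_mem_Icc ⟨by linarith, h3⟩
  have hcosφ1 : Real.cos φ ≤ 1 := Real.cos_le_one φ
  have hsinφ1 : Real.sin φ ≤ 1 := Real.sin_le_one φ
  have htθ : 0 < Real.tan θ' := Real.tan_pos_of_pos_of_lt_pi_div_two h1 hθ2
  -- components of the exponentials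
  have hpre : (Complex.exp ((φ : ℂ) * Complex.I)).re = Real.cos φ :=
    Complex.exp_ofReal_mul_I_re φ
  have hpim : (Complex.exp ((φ : ℂ) * Complex.I)).im = Real.sin φ :=
    Complex.exp_ofReal_mul_I_im φ
  have hneg : (-(φ : ℂ)) = ((-φ : ℝ) : ℂ) := by push_cast; ring
  have hmre : (Complex.exp (-(φ : ℂ) * Complex.I)).re = Real.cos φ := by
    rw [hneg, Complex.exp_ofReal_mul_I_re, Real.cos_neg]
  have hmim : (Complex.exp (-(φ : ℂ) * Complex.I)).im = -Real.sin φ := by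
    rw [hneg, Complex.exp_ofReal_mul_I_im, Real.sin_neg]
  have hmre' : (Complex.exp (-((φ : ℂ) * Complex.I))).re = Real.cos φ := by
    rw [← neg_mul]; exact hmre
  have hmim' : (Complex.exp (-((φ : ℂ) * Complex.I))).im = -Real.sin φ := by
    rw [← neg_mul]; exact hmim
  ext z
  simp only [Set.mem_setOf_eq, Set.mem_iUnion, Set.mem_union, Set.mem_image, Set.mem_Ioi,
    exists_prop]
  constructor
  · rintro ⟨hz0, hargz⟩
    have hre : 0 < z.re := aux_re_pos hz0 hargz h3
    have habsz : 0 < ‖z‖ := norm_pos_iff.mpr hz0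
    have harg := abs_lt.mp hargz
    have hcosa : ‖z‖ * Real.cos (Complex.arg z) = z.re := Complex.norm_mul_cos_arg z
    have hsina : ‖z‖ * Real.sin (Complex.arg z) = z.im := Complex.norm_mul_sin_arg z
    rcases lt_trichotomy z.im 0 with him | him | him
    · -- use the `-φ` vertex with `r = -z.im / sin φ`
      have key : 0 < z.re * Real.sin φ + z.im * Real.cos φ := by
        have hs : 0 < Real.sin (φ + Complex.arg z) :=
          Real.sin_pos_of_pos_of_lt_pi (by linarith) (by linarith)
        have heq : z.re * Real.sin φ + z.im * Real.cos φ
            = ‖z‖ * Real.sin (φ + Complex.arg z) := by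
          rw [Real.sin_add, ← hcosa, ← hsina]; ring
        rw [heq]; positivity
      set r : ℝ := -z.im / Real.sin φ with hr
      have hrpos : 0 < r := by
        apply div_pos (by linarith) hsinφ
      refine ⟨r, hrpos, Or.inr ⟨z - (r : ℂ) * Complex.exp (-(φ : ℂ) * Complex.I), ⟨?_, ?_⟩,
        by ring⟩⟩
      all_goals
        have hwre : (z - (r : ℂ) * Complex.exp (-(φ : ℂ) * Complex.I)).re
            = z.re - r * Real.cos φ := by
          simp [Complex.sub_re, Complex.mul_re, hmre, hmim, hmre', hmim']
      all_goals
        have hwim : (z - (r : ℂ) * Complex.exp (-(φ : ℂ) * Complex.I)).im = 0 := by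
          simp only [Complex.sub_im, Complex.mul_im, Complex.ofReal_re, Complex.ofReal_im,
            hmre, hmim, hmre', hmim']
          rw [hr]
          field_simp
          ring
      all_goals
        have hwrepos : 0 < (z - (r : ℂ) * Complex.exp (-(φ : ℂ) * Complex.I)).re := by
          rw [hwre, hr]
          rw [div_mul_eq_mul_div, sub_div' hsinφ.ne']
          apply div_pos _ hsinφ
          nlinarith
      · intro hzero
        rw [hzero] at hwrepos
        simp at hwrepos
      · have : Complex.arg (z - (r : ℂ) * Complex.exp (-(φ : ℂ) * Complex.I)) = 0 :=
          Complex.arg_eq_zero_iff.mpr ⟨hwrepos.le, hwim⟩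
        rw [this]
        simpa using h1
    · -- `z` is a positive real; use the `+φ` vertex with a small `r`
      set r : ℝ := z.re * min (1 / 2) (Real.tan θ' / 4) with hr
      have hminpos : 0 < min (1 / 2 : ℝ) (Real.tan θ' / 4) := lt_min (by norm_num) (by positivity)
      have hrpos : 0 < r := mul_pos hre hminpos
      have hr1 : r ≤ z.re / 2 := by
        have := min_le_left (1 / 2 : ℝ) (Real.tan θ' / 4)
        rw [hr]; nlinarith
      have hr2 : r ≤ z.re * Real.tan θ' / 4 := by
        have := min_le_right (1 / 2 : ℝ) (Real.tan θ' / 4)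
        rw [hr]; nlinarith
      refine ⟨r, hrpos, Or.inl ⟨z - (r : ℂ) * Complex.exp ((φ : ℂ) * Complex.I), ⟨?_, ?_⟩,
        by ring⟩⟩
      all_goals
        have hwre : (z - (r : ℂ) * Complex.exp ((φ : ℂ) * Complex.I)).re
            = z.re - r * Real.cos φ := by
          simp [Complex.sub_re, Complex.mul_re, hpre, hpim]
      all_goals
        have hwim : (z - (r : ℂ) * Complex.exp ((φ : ℂ) * Complex.I)).im
            = -(r * Real.sin φ) := by
          simp [Complex.sub_im, Complex.mul_im, hpre, hpim, him]
      all_goals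
        have hwrepos : 0 < (z - (r : ℂ) * Complex.exp ((φ : ℂ) * Complex.I)).re := by
          rw [hwre]; nlinarith
      · intro hzero
        rw [hzero] at hwrepos
        simp at hwrepos
      · rw [aux_arg_iff hwrepos h1 hθ2, hwre, hwim]
        rw [abs_neg, abs_of_nonneg (by positivity)]
        nlinarith [mul_le_mul_of_nonneg_left hr1 htθ.le,
          mul_nonneg htθ.le (mul_nonneg hrpos.le (sub_nonneg.mpr hcosφ1)),
          mul_le_mul_of_nonneg_left hsinφ1 hrpos.le, mul_pos htθ hre]
    · -- use the `+φ` vertex with `r = z.im / sin φ`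
      have key : 0 < z.re * Real.sin φ - z.im * Real.cos φ := by
        have hs : 0 < Real.sin (φ - Complex.arg z) :=
          Real.sin_pos_of_pos_of_lt_pi (by linarith) (by linarith)
        have heq : z.re * Real.sin φ - z.im * Real.cos φ
            = ‖z‖ * Real.sin (φ - Complex.arg z) := by
          rw [Real.sin_sub, ← hcosa, ← hsina]; ring
        rw [heq]; positivity
      set r : ℝ := z.im / Real.sin φ with hr
      have hrpos : 0 < r := div_pos him hsinφ
      refine ⟨r, hrpos, Or.inl ⟨z - (r : ℂ) * Complex.exp ((φ : ℂ) * Complex.I), ⟨?_, ?_⟩,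
        by ring⟩⟩
      all_goals
        have hwre : (z - (r : ℂ) * Complex.exp ((φ : ℂ) * Complex.I)).re
            = z.re - r * Real.cos φ := by
          simp [Complex.sub_re, Complex.mul_re, hpre, hpim]
      all_goals
        have hwim : (z - (r : ℂ) * Complex.exp ((φ : ℂ) * Complex.I)).im = 0 := by
          simp only [Complex.sub_im, Complex.mul_im, Complex.ofReal_re, Complex.ofReal_im,
            hpre, hpim]
          rw [hr]
          field_simp
          ring
      all_goals
        have hwrepos : 0 < (z - (r : ℂ) * Complex.exp ((φ : ℂ) * Complex.I)).re := by
          rw [hwre, hr]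
          rw [div_mul_eq_mul_div, sub_div' hsinφ.ne']
          apply div_pos _ hsinφ
          nlinarith
      · intro hzero
        rw [hzero] at hwrepos
        simp at hwrepos
      · have : Complex.arg (z - (r : ℂ) * Complex.exp ((φ : ℂ) * Complex.I)) = 0 :=
          Complex.arg_eq_zero_iff.mpr ⟨hwrepos.le, hwim⟩
        rw [this]
        simpa using h1
  · rintro ⟨r, hrpos, ⟨w, ⟨hw0, hwarg⟩, rfl⟩ | ⟨w, ⟨hw0, hwarg⟩, rfl⟩⟩
    all_goals
      have hwre : 0 < w.re := aux_re_pos hw0 hwarg (by linarith)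
    all_goals
      have hwim : |w.im| < Real.tan θ' * w.re := (aux_arg_iff hwre h1 hθ2).mp hwarg
    all_goals
      have hwimabs := abs_lt.mp hwim
    -- `+φ` case
    · have hzre : ((r : ℂ) * Complex.exp ((φ : ℂ) * Complex.I) + w).re
          = r * Real.cos φ + w.re := by
        simp [Complex.add_re, Complex.mul_re, hpre, hpim]
      have hzim : ((r : ℂ) * Complex.exp ((φ : ℂ) * Complex.I) + w).im
          = r * Real.sin φ + w.im := by
        simp [Complex.add_im, Complex.mul_im, hpre, hpim]
      have hzrepos : 0 < ((r : ℂ) * Complex.exp ((φ : ℂ) * Complex.I) + w).re := by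
        rw [hzre]; positivity
      refine ⟨fun hzero => by rw [hzero] at hzrepos; simp at hzrepos, ?_⟩
      rcases eq_or_lt_of_le h3 with hφeq | hφlt
      · have h5 := Complex.abs_arg_lt_pi_div_two_iff.mpr (Or.inl hzrepos)
        rwa [← hφeq] at h5
      · have hcosφpos : 0 < Real.cos φ := Real.cos_pos_of_mem_Ioo ⟨by linarith, hφlt⟩
        have htanφ : Real.tan φ * Real.cos φ = Real.sin φ := by
          rw [Real.tan_eq_sin_div_cos, div_mul_cancel₀ _ hcosφpos.ne']
        have htlt : Real.tan θ' < Real.tan φ :=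
          Real.tan_lt_tan_of_nonneg_of_lt_pi_div_two h1.le hφlt h2
        rw [aux_arg_iff hzrepos hφpos hφlt, hzre, hzim]
        rw [abs_lt]
        constructor <;> nlinarith
    -- `-φ` case
    · have hzre : ((r : ℂ) * Complex.exp (-(φ : ℂ) * Complex.I) + w).re
          = r * Real.cos φ + w.re := by
        simp [Complex.add_re, Complex.mul_re, hmre, hmim, hmre', hmim']
      have hzim : ((r : ℂ) * Complex.exp (-(φ : ℂ) * Complex.I) + w).im
          = -(r * Real.sin φ) + w.im := by
        simp [Complex.add_im, Complex.mul_im, hmre, hmim, hmre', hmim']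
      have hzrepos : 0 < ((r : ℂ) * Complex.exp (-(φ : ℂ) * Complex.I) + w).re := by
        rw [hzre]; positivity
      refine ⟨fun hzero => by rw [hzero] at hzrepos; simp at hzrepos, ?_⟩
      rcases eq_or_lt_of_le h3 with hφeq | hφlt
      · have h5 := Complex.abs_arg_lt_pi_div_two_iff.mpr (Or.inl hzrepos)
        rwa [← hφeq] at h5
      · have hcosφpos : 0 < Real.cos φ := Real.cos_pos_of_mem_Ioo ⟨by linarith, hφlt⟩
        have htanφ : Real.tan φ * Real.cos φ = Real.sin φ := by
          rw [Real.tan_eq_sin_div_cos, div_mul_cancel₀ _ hcosφpos.ne']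
        have htlt : Real.tan θ' < Real.tan φ :=
          Real.tan_lt_tan_of_nonneg_of_lt_pi_div_two h1.le hφlt h2
        rw [aux_arg_iff hzrepos hφpos hφlt, hzre, hzim]
        rw [abs_lt]
        constructor <;> nlinarith
end

section
/- Let X be a complex Banach space, 0 < θ' < φ ≤ π/2, and set S̄_φ := {0} ∪ {z ∈ ℂ \ {0} : |arg z| ≤ φ} and Σ_α := {z ∈ ℂ \ {0} : |arg z| < α}. Let F : S̄_φ → L(X) satisfy F(z + w) = F(z) ∘ F(w) for all z, w ∈ S̄_φ. If the restriction of F to Σ_{θ'} is holomorphic (differentiable in operator norm at every point of Σ_{θ'}), then F is holomorphic on all of Σ_φ. -/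
/-- The open sector `Σ_α = {z ∈ ℂ \ {0} : |arg z| < α}`. -/
def Sector (α : ℝ) : Set ℂ := {z : ℂ | z ≠ 0 ∧ |Complex.arg z| < α}

/-- The closed sector `S̄_φ = {0} ∪ {z ∈ ℂ \ {0} : |arg z| ≤ φ}`. -/
def ClosedSector (φ : ℝ) : Set ℂ := {z : ℂ | z = 0 ∨ |Complex.arg z| ≤ φ}

lemma sector_isOpen (α : ℝ) (hα : α ≤ Real.pi / 2) : IsOpen (Sector α) := by
  have heq : Sector α = {z : ℂ | 0 < z.re} ∩ Complex.arg ⁻¹' Set.Ioo (-α) α := by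
    ext z
    constructor
    · rintro ⟨hz, harg⟩
      have hre : 0 < z.re := by
        have := (Complex.abs_arg_lt_pi_div_two_iff (z := z)).mp (lt_of_lt_of_le harg hα)
        rcases this with h | h
        · exact h
        · exact absurd h hz
      exact ⟨hre, abs_lt.mp harg⟩
    · rintro ⟨hre, harg⟩
      refine ⟨fun h => by simp [h] at hre, abs_lt.mpr harg⟩
  rw [heq]
  have hopen : IsOpen {z : ℂ | 0 < z.re} := isOpen_lt continuous_const Complex.continuous_re
  refine ContinuousOn.isOpen_inter_preimage ?_ hopen isOpen_Ioo
  exact fun z hz => (Complex.continuousAt_arg (Or.inl hz)).continuousWithinAt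

lemma sector_subset_closed {α φ : ℝ} (h : α ≤ φ) : Sector α ⊆ ClosedSector φ :=
  fun z hz => Or.inr (le_trans hz.2.le h)

/-- **Extension of holomorphy via the semigroup law.**
Let `X` be a complex Banach space, `0 < θ' < φ ≤ π/2`, and let `F : S̄_φ → L(X)` satisfy
`F(z+w) = F(z) ∘ F(w)` for all `z, w ∈ S̄_φ`.  If `F` is holomorphic (in operator norm)
on `Σ_{θ'}`, then `F` is holomorphic on all of `Σ_φ`. -/
theorem stmt_9 {X : Type*} [NormedAddCommGroup X] [NormedSpace ℂ X] [CompleteSpace X]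
    (θ' φ : ℝ) (h1 : 0 < θ') (h2 : θ' < φ) (h3 : φ ≤ Real.pi / 2)
    (F : ℂ → X →L[ℂ] X)
    (hsg : ∀ z ∈ ClosedSector φ, ∀ w ∈ ClosedSector φ, F (z + w) = F z ∘L F w)
    (hol : DifferentiableOn ℂ F (Sector θ')) :
    DifferentiableOn ℂ F (Sector φ) := by
  have hopenφ : IsOpen (Sector φ) := sector_isOpen φ h3
  have hopenθ : IsOpen (Sector θ') := sector_isOpen θ' (le_of_lt (lt_of_lt_of_le h2 h3))
  intro z hz
  -- find ε > 0 with z - ε ∈ Sector φ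
  have htend : Filter.Tendsto (fun ε : ℝ => z - (ε : ℂ)) (nhdsWithin 0 (Set.Ioi (0:ℝ))) (nhds z) := by
    have : Filter.Tendsto (fun ε : ℝ => z - (ε : ℂ)) (nhds 0) (nhds z) := by
      have := (Complex.continuous_ofReal.tendsto 0).const_sub z
      simpa using this
    exact this.mono_left nhdsWithin_le_nhds
  have hev : ∀ᶠ (ε : ℝ) in nhdsWithin (0:ℝ) (Set.Ioi (0:ℝ)), z - (ε : ℂ) ∈ Sector φ :=
    htend.eventually_mem (hopenφ.mem_nhds hz)
  obtain ⟨ε, hεmem, hεpos⟩ := (hev.and self_mem_nhdsWithin).exists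
  set v : ℂ := z - (ε : ℂ) with hv
  have hεpos : (0:ℝ) < ε := hεpos
  have hεsec : (ε : ℂ) ∈ Sector θ' := by
    constructor
    · exact_mod_cast hεpos.ne'
    · rw [Complex.arg_ofReal_of_nonneg hεpos.le]
      simpa using h1
  -- eventually equal to a differentiable function
  have hveq : ∀ ζ : ℂ, ζ - v = ζ - z + (ε : ℂ) := by intro ζ; rw [hv]; ring
  have heventual : ∀ᶠ ζ in nhds z, F ζ = (F (ζ - v)) ∘L F v := by
    have htend2 : Filter.Tendsto (fun ζ : ℂ => ζ - v) (nhds z) (nhds (ε : ℂ)) := by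
      have : Filter.Tendsto (fun ζ : ℂ => ζ - v) (nhds z) (nhds (z - v)) :=
        (continuous_id.sub continuous_const).tendsto z
      simpa [hv] using this
    filter_upwards [htend2.eventually_mem (hopenθ.mem_nhds hεsec)] with ζ hζ
    have h1' : ζ - v ∈ ClosedSector φ := sector_subset_closed h2.le hζ
    have h2' : v ∈ ClosedSector φ := sector_subset_closed le_rfl hεmem
    have := hsg (ζ - v) h1' v h2'
    simpa using this
  have hdiff : DifferentiableAt ℂ (fun ζ : ℂ => (F (ζ - v)) ∘L F v) z := by
    have hF : DifferentiableAt ℂ (fun ζ : ℂ => F (ζ - v)) z := by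
      have hsub : DifferentiableAt ℂ (fun ζ : ℂ => ζ - v) z :=
        differentiableAt_id.sub_const v
      have hFe : DifferentiableAt ℂ F (z - v) := by
        have : z - v = (ε : ℂ) := by rw [hv]; ring
        rw [this]
        exact (hol.differentiableAt (hopenθ.mem_nhds hεsec))
      exact hFe.comp z hsub
    exact hF.clm_comp (differentiableAt_const (F v))
  have heq : F =ᶠ[nhds z] fun ζ : ℂ => (F (ζ - v)) ∘L F v := heventual
  exact (heq.differentiableAt_iff.mpr hdiff).differentiableWithinAt
end

section
/- Let X be a complex Banach space, D(A) ⊆ X a linear subspace, A : D(A) → X linear, and φ ∈ ℝ. Suppose that for every λ > 0 there exist bounded operators R(λ), R_φ(λ) ∈ L(X) with range contained in D(A) such that λ·R(λ)x − A(R(λ)x) = x and λ·R_φ(λ)x − e^{iφ}A(R_φ(λ)x) = x for all x ∈ X, R(λ)(λy − Ay) = y and R_φ(λ)(λy − e^{iφ}Ay) = y for all y ∈ D(A), and that sup_{λ>0} ‖λR(λ)‖ < ∞ and sup_{λ>0} ‖λR_φ(λ)‖ < ∞. Then for every α ∈ (0,1] and every x ∈ X: sup_{λ>0} ‖λ^α(λR(λ)x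 − x)‖ < ∞ if and only if sup_{λ>0} ‖λ^α(λR_φ(λ)x − x)‖ < ∞. (Equivalently, the Favard space of order α of A coincides with that of A_φ = e^{iφ}A, since A(R(λ)x) = λR(λ)x − x and e^{iφ}A(R_φ(λ)x) = λR_φ(λ)x − x.) -/
/-- **Equality of Favard spaces of `A` and of `A_φ = e^{iφ} A`.**
Let `A : D(A) → X` be linear on a subspace of a complex Banach space `X` and `φ ∈ ℝ`.
Suppose that for every `λ > 0` both `A` and `e^{iφ}A` have a resolvent at `λ`
(operators `R(λ)`, `R_φ(λ)` with the usual left/right inverse identities), satisfying the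
Hille--Yosida-type bounds `sup_{λ>0} ‖λ R(λ)‖ < ∞` and `sup_{λ>0} ‖λ R_φ(λ)‖ < ∞`.
Then for every `α ∈ (0,1]` and `x ∈ X`:
`sup_{λ>0} ‖λ^α (λ R(λ) x - x)‖ < ∞  ↔  sup_{λ>0} ‖λ^α (λ R_φ(λ) x - x)‖ < ∞`,
i.e. `Fav_α^A = Fav_α^{A_φ}` (note `A R(λ) x = λ R(λ) x - x` and
`e^{iφ} A R_φ(λ) x = λ R_φ(λ) x - x`). -/
theorem stmt_10 {X : Type*} [NormedAddCommGroup X] [NormedSpace ℂ X] [CompleteSpace X]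
    (DA : Submodule ℂ X) (A : DA →ₗ[ℂ] X) (φ : ℝ)
    (R Rφ : ℝ → X →L[ℂ] X)
    (hRmem : ∀ l : ℝ, 0 < l → ∀ x : X, R l x ∈ DA)
    (hRφmem : ∀ l : ℝ, 0 < l → ∀ x : X, Rφ l x ∈ DA)
    (hRres : ∀ l : ℝ, ∀ hl : 0 < l, ∀ x : X,
      (l : ℂ) • R l x - A ⟨R l x, hRmem l hl x⟩ = x)
    (hRφres : ∀ l : ℝ, ∀ hl : 0 < l, ∀ x : X,
      (l : ℂ) • Rφ l x - Complex.exp ((φ : ℂ) * Complex.I) • A ⟨Rφ l x, hRφmem l hl x⟩ = x)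
    (hRres' : ∀ l : ℝ, 0 < l → ∀ y : DA, R l ((l : ℂ) • (y : X) - A y) = (y : X))
    (hRφres' : ∀ l : ℝ, 0 < l → ∀ y : DA,
      Rφ l ((l : ℂ) • (y : X) - Complex.exp ((φ : ℂ) * Complex.I) • A y) = (y : X))
    (hRbdd : ∃ C : ℝ, ∀ l : ℝ, 0 < l → l * ‖R l‖ ≤ C)
    (hRφbdd : ∃ C : ℝ, ∀ l : ℝ, 0 < l → l * ‖Rφ l‖ ≤ C) :
    ∀ α : ℝ, 0 < α → α ≤ 1 → ∀ x : X,
      ((∃ C : ℝ, ∀ l : ℝ, 0 < l → l ^ α * ‖(l : ℂ) • R l x - x‖ ≤ C) ↔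
        (∃ C : ℝ, ∀ l : ℝ, 0 < l → l ^ α * ‖(l : ℂ) • Rφ l x - x‖ ≤ C)) := by
  intro α hα hα1 x
  obtain ⟨M, hM⟩ := hRbdd
  obtain ⟨M', hM'⟩ := hRφbdd
  have hM0 : 0 ≤ M := le_trans (by positivity) (hM 1 one_pos)
  have hM'0 : 0 ≤ M' := le_trans (by positivity) (hM' 1 one_pos)
  set e : ℂ := Complex.exp ((φ : ℂ) * Complex.I) with he
  have he0 : e ≠ 0 := Complex.exp_ne_zero _
  have habs : ‖e‖ = 1 := by
    rw [he, Complex.norm_exp]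
    simp
  have hlnorm : ∀ l : ℝ, 0 < l → ‖(l : ℂ)‖ = l := by
    intro l hl
    simp [abs_of_pos hl]
  constructor
  · -- from A to A_φ
    rintro ⟨C, hC⟩
    refine ⟨(1 + ‖e - 1‖ * M') * C, fun l hl => ?_⟩
    have h1 := hRres l hl x
    rw [sub_eq_iff_eq_add] at h1
    have hAy : (A ⟨R l x, hRmem l hl x⟩ : X) = (l : ℂ) • R l x - x := by
      rw [h1]; abel
    have key : ∀ y : DA, Rφ l ((l : ℂ) • (y : X) - A y) = (y : X) + (e - 1) • Rφ l (A y) := by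
      intro y
      have hsplit : (l : ℂ) • (y : X) - A y
          = ((l : ℂ) • (y : X) - e • A y) + (e - 1) • (A y : X) := by module
      rw [hsplit, map_add, map_smul, hRφres' l hl y]
    have h2 := key ⟨R l x, hRmem l hl x⟩
    simp only [Submodule.coe_mk] at h2
    rw [hRres l hl x] at h2
    rw [hAy] at h2
    have h3 : (l : ℂ) • Rφ l x - x
        = ((l : ℂ) • R l x - x) + (e - 1) • ((l : ℂ) • Rφ l ((l : ℂ) • R l x - x)) := by
      rw [h2]; module
    have hb : ‖(l : ℂ) • Rφ l ((l : ℂ) • R l x - x)‖ ≤ M' * ‖(l : ℂ) • R l x - x‖ := by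
      rw [norm_smul, hlnorm l hl]
      calc l * ‖Rφ l ((l : ℂ) • R l x - x)‖
          ≤ l * (‖Rφ l‖ * ‖(l : ℂ) • R l x - x‖) := by
            exact mul_le_mul_of_nonneg_left ((Rφ l).le_opNorm _) hl.le
        _ = (l * ‖Rφ l‖) * ‖(l : ℂ) • R l x - x‖ := by ring
        _ ≤ M' * ‖(l : ℂ) • R l x - x‖ :=
            mul_le_mul_of_nonneg_right (hM' l hl) (norm_nonneg _)
    have hn : ‖(l : ℂ) • Rφ l x - x‖ ≤ (1 + ‖e - 1‖ * M') * ‖(l : ℂ) • R l x - x‖ := by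
      rw [h3]
      calc ‖((l : ℂ) • R l x - x) + (e - 1) • ((l : ℂ) • Rφ l ((l : ℂ) • R l x - x))‖
          ≤ ‖(l : ℂ) • R l x - x‖ + ‖(e - 1) • ((l : ℂ) • Rφ l ((l : ℂ) • R l x - x))‖ :=
            norm_add_le _ _
        _ = ‖(l : ℂ) • R l x - x‖ + ‖e - 1‖ * ‖(l : ℂ) • Rφ l ((l : ℂ) • R l x - x)‖ := by
            rw [norm_smul]
        _ ≤ ‖(l : ℂ) • R l x - x‖ + ‖e - 1‖ * (M' * ‖(l : ℂ) • R l x - x‖) := by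
            have := mul_le_mul_of_nonneg_left hb (norm_nonneg (e - 1))
            linarith
        _ = (1 + ‖e - 1‖ * M') * ‖(l : ℂ) • R l x - x‖ := by ring
    have hc0 : (0 : ℝ) ≤ 1 + ‖e - 1‖ * M' :=
      add_nonneg zero_le_one (mul_nonneg (norm_nonneg _) hM'0)
    calc l ^ α * ‖(l : ℂ) • Rφ l x - x‖
        ≤ l ^ α * ((1 + ‖e - 1‖ * M') * ‖(l : ℂ) • R l x - x‖) :=
          mul_le_mul_of_nonneg_left hn (by positivity)
      _ = (1 + ‖e - 1‖ * M') * (l ^ α * ‖(l : ℂ) • R l x - x‖) := by ring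
      _ ≤ (1 + ‖e - 1‖ * M') * C := mul_le_mul_of_nonneg_left (hC l hl) hc0
  · -- from A_φ to A
    rintro ⟨C, hC⟩
    refine ⟨(1 + ‖1 - e‖ * M) * C, fun l hl => ?_⟩
    have h1 := hRφres l hl x
    rw [sub_eq_iff_eq_add] at h1
    have hAy : (A ⟨Rφ l x, hRφmem l hl x⟩ : X) = e⁻¹ • ((l : ℂ) • Rφ l x - x) := by
      rw [h1, add_sub_cancel_left, smul_smul, inv_mul_cancel₀ he0, one_smul]
    have key : ∀ y : DA, R l ((l : ℂ) • (y : X) - e • A y)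
        = (y : X) + (1 - e) • R l (A y) := by
      intro y
      have hsplit : (l : ℂ) • (y : X) - e • (A y : X)
          = ((l : ℂ) • (y : X) - A y) + (1 - e) • (A y : X) := by module
      rw [hsplit, map_add, map_smul, hRres' l hl y]
    have h2 := key ⟨Rφ l x, hRφmem l hl x⟩
    simp only [Submodule.coe_mk] at h2
    have h1' := hRφres l hl x
    rw [h1'] at h2
    rw [hAy] at h2
    have h3 : (l : ℂ) • R l x - x
        = ((l : ℂ) • Rφ l x - x)
          + ((1 - e) * e⁻¹) • ((l : ℂ) • R l ((l : ℂ) • Rφ l x - x)) := by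
      rw [h2, map_smul]; module
    have hcoef : ‖(1 - e) * e⁻¹‖ = ‖1 - e‖ := by
      rw [norm_mul, norm_inv, habs]; simp
    have hb : ‖(l : ℂ) • R l ((l : ℂ) • Rφ l x - x)‖ ≤ M * ‖(l : ℂ) • Rφ l x - x‖ := by
      rw [norm_smul, hlnorm l hl]
      calc l * ‖R l ((l : ℂ) • Rφ l x - x)‖
          ≤ l * (‖R l‖ * ‖(l : ℂ) • Rφ l x - x‖) :=
            mul_le_mul_of_nonneg_left ((R l).le_opNorm _) hl.le
        _ = (l * ‖R l‖) * ‖(l : ℂ) • Rφ l x - x‖ := by ring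
        _ ≤ M * ‖(l : ℂ) • Rφ l x - x‖ :=
            mul_le_mul_of_nonneg_right (hM l hl) (norm_nonneg _)
    have hn : ‖(l : ℂ) • R l x - x‖ ≤ (1 + ‖1 - e‖ * M) * ‖(l : ℂ) • Rφ l x - x‖ := by
      rw [h3]
      calc ‖((l : ℂ) • Rφ l x - x)
            + ((1 - e) * e⁻¹) • ((l : ℂ) • R l ((l : ℂ) • Rφ l x - x))‖
          ≤ ‖(l : ℂ) • Rφ l x - x‖
            + ‖((1 - e) * e⁻¹) • ((l : ℂ) • R l ((l : ℂ) • Rφ l x - x))‖ := norm_add_le _ _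
        _ = ‖(l : ℂ) • Rφ l x - x‖
            + ‖1 - e‖ * ‖(l : ℂ) • R l ((l : ℂ) • Rφ l x - x)‖ := by
            rw [norm_smul, hcoef]
        _ ≤ ‖(l : ℂ) • Rφ l x - x‖ + ‖1 - e‖ * (M * ‖(l : ℂ) • Rφ l x - x‖) := by
            have := mul_le_mul_of_nonneg_left hb (norm_nonneg (1 - e))
            linarith
        _ = (1 + ‖1 - e‖ * M) * ‖(l : ℂ) • Rφ l x - x‖ := by ring
    have hc0 : (0 : ℝ) ≤ 1 + ‖1 - e‖ * M :=
      add_nonneg zero_le_one (mul_nonneg (norm_nonneg _) hM0)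
    calc l ^ α * ‖(l : ℂ) • R l x - x‖
        ≤ l ^ α * ((1 + ‖1 - e‖ * M) * ‖(l : ℂ) • Rφ l x - x‖) :=
          mul_le_mul_of_nonneg_left hn (by positivity)
      _ = (1 + ‖1 - e‖ * M) * (l ^ α * ‖(l : ℂ) • Rφ l x - x‖) := by ring
      _ ≤ (1 + ‖1 - e‖ * M) * C := mul_le_mul_of_nonneg_left (hC l hl) hc0
end

section
/- Let f : [0,1] → ℝ be continuous and twice differentiable on (0,1), and let a : (0,1) → (0,∞) be continuous. Suppose N := sup_{r∈(0,1)} |a(r)·f''(r)| < ∞. Then for every s ∈ (0,1) and every ε ≠ 0 with s + ε ∈ (0,1): |f'(s)| ≤ (2/|ε|)·sup_{t∈[0,1]} |f(t)| + N·|∫_s^{s+ε} dr/a(r)|. -/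
/-- **Taylor estimate for the first derivative.**
Let `f : [0,1] → ℝ` be continuous and twice differentiable on `(0,1)`, let
`a : (0,1) → (0,∞)` be continuous, and let `N = sup_{r ∈ (0,1)} |a(r) f''(r)| < ∞`.
Then for every `s ∈ (0,1)` and every `ε ≠ 0` with `s + ε ∈ (0,1)`:
`|f'(s)| ≤ (2/|ε|) sup_{t ∈ [0,1]} |f(t)| + N |∫_s^{s+ε} dr / a(r)|`. -/
theorem stmt_11 (f f' f'' a : ℝ → ℝ)
    (hf : ContinuousOn f (Set.Icc 0 1))
    (hf' : ∀ x ∈ Set.Ioo (0 : ℝ) 1, HasDerivAt f (f' x) x)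
    (hf'' : ∀ x ∈ Set.Ioo (0 : ℝ) 1, HasDerivAt f' (f'' x) x)
    (ha : ContinuousOn a (Set.Ioo 0 1))
    (hapos : ∀ r ∈ Set.Ioo (0 : ℝ) 1, 0 < a r)
    (hbdd : BddAbove ((fun r => |a r * f'' r|) '' Set.Ioo (0 : ℝ) 1)) :
    ∀ s ∈ Set.Ioo (0 : ℝ) 1, ∀ ε : ℝ, ε ≠ 0 → s + ε ∈ Set.Ioo (0 : ℝ) 1 →
      |f' s| ≤ 2 / |ε| * sSup ((fun t => |f t|) '' Set.Icc (0 : ℝ) 1) +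
        sSup ((fun r => |a r * f'' r|) '' Set.Ioo (0 : ℝ) 1) *
          |∫ r in s..(s + ε), (a r)⁻¹| := by
  intro s hs ε hε hsε
  set N := sSup ((fun r => |a r * f'' r|) '' Set.Ioo (0 : ℝ) 1) with hNdef
  set M := sSup ((fun t => |f t|) '' Set.Icc (0 : ℝ) 1) with hMdef
  have hεpos : 0 < |ε| := abs_pos.2 hε
  -- N bounds
  have hN : ∀ r ∈ Set.Ioo (0 : ℝ) 1, |a r * f'' r| ≤ N := fun r hr =>
    le_csSup hbdd ⟨r, hr, rfl⟩
  have hN0 : 0 ≤ N :=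
    le_trans (abs_nonneg _) (hN (1/2) (by norm_num))
  -- M bounds
  have hMbdd : BddAbove ((fun t => |f t|) '' Set.Icc (0 : ℝ) 1) :=
    (isCompact_Icc.bddAbove_image hf.abs)
  have hM : ∀ t ∈ Set.Icc (0 : ℝ) 1, |f t| ≤ M := fun t ht =>
    le_csSup hMbdd ⟨t, ht, rfl⟩
  -- the interval lies in (0,1)
  have hsub : Set.uIcc s (s + ε) ⊆ Set.Ioo 0 1 :=
    Set.ordConnected_Ioo.uIcc_subset hs hsε
  -- pointwise bound on f''
  have hf''bd : ∀ r ∈ Set.Ioo (0 : ℝ) 1, |f'' r| ≤ N * (a r)⁻¹ := by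
    intro r hr
    have har := hapos r hr
    have := hN r hr
    rw [abs_mul, abs_of_pos har] at this
    rw [le_mul_inv_iff₀ har]
    linarith [mul_comm (a r) |f'' r|]
  -- |s+ε-r| ≤ |ε| on the interval
  have hdist : ∀ r ∈ Set.uIcc s (s + ε), |s + ε - r| ≤ |ε| := by
    intro r hr
    rcases le_total 0 ε with h | h
    · rw [Set.uIcc_of_le (by linarith)] at hr
      rw [abs_of_nonneg h]
      rw [abs_le]; constructor <;> [linarith [hr.2]; linarith [hr.1]]
    · rw [Set.uIcc_of_ge (by linarith)] at hr
      rw [abs_of_nonpos h]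
      rw [abs_le]; constructor <;> [linarith [hr.2]; linarith [hr.1]]
  -- bound function is interval integrable
  have hainv : IntervalIntegrable (fun r => |ε| * (N * (a r)⁻¹)) MeasureTheory.volume s (s + ε) := by
    apply ContinuousOn.intervalIntegrable
    exact (continuousOn_const.mul (continuousOn_const.mul
      ((ha.mono hsub).inv₀ (fun r hr => (hapos r (hsub hr)).ne')))).congr (fun r hr => rfl)
  -- the remainder integrand
  set G : ℝ → ℝ := fun r => (s + ε - r) * f'' r with hGdef
  -- measurability of G on the interval
  have hGmeas : MeasureTheory.AEStronglyMeasurable G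
      (MeasureTheory.volume.restrict (Set.uIoc s (s + ε))) := by
    have hmeas : Measurable fun r => (s + ε - r) * deriv f' r :=
      (measurable_const.sub measurable_id).mul (measurable_deriv f')
    apply hmeas.aestronglyMeasurable.congr
    apply (MeasureTheory.ae_restrict_mem measurableSet_uIoc).mono
    intro r hr
    have hrmem : r ∈ Set.Ioo (0:ℝ) 1 := hsub (Set.uIoc_subset_uIcc hr)
    simp only [hGdef, (hf'' r hrmem).deriv]
  -- pointwise norm bound on the interval
  have hGbd : ∀ᵐ r ∂(MeasureTheory.volume.restrict (Set.uIoc s (s + ε))),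
      ‖G r‖ ≤ |ε| * (N * (a r)⁻¹) := by
    apply (MeasureTheory.ae_restrict_mem measurableSet_uIoc).mono
    intro r hr
    have hrIcc := Set.uIoc_subset_uIcc hr
    have hrmem : r ∈ Set.Ioo (0:ℝ) 1 := hsub hrIcc
    have h1 := hdist r hrIcc
    have h2 := hf''bd r hrmem
    have h3 : (0:ℝ) ≤ N * (a r)⁻¹ :=
      mul_nonneg hN0 (inv_nonneg.2 (hapos r hrmem).le)
    calc ‖G r‖ = |s + ε - r| * |f'' r| := abs_mul _ _
      _ ≤ |ε| * (N * (a r)⁻¹) :=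
        mul_le_mul h1 h2 (abs_nonneg _) (abs_nonneg _)
  have hGint : IntervalIntegrable G MeasureTheory.volume s (s + ε) :=
    hainv.mono_fun' hGmeas hGbd
  -- Taylor identity
  have hderivg : ∀ r ∈ Set.uIcc s (s + ε),
      HasDerivAt (fun r => f r + (s + ε - r) * f' r) (G r) r := by
    intro r hr
    have hrmem := hsub hr
    have h1 := hf' r hrmem
    have h2 : HasDerivAt (fun r => (s + ε - r) * f' r)
        ((0 - 1) * f' r + (s + ε - r) * f'' r) r := by
      exact
        ((hasDerivAt_const r (s + ε)).sub (hasDerivAt_id' r)).mul (hf'' r hrmem)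
    have := h1.fun_add h2
    refine this.congr_deriv ?_
    show _ = (s + ε - r) * f'' r
    ring
  have hkey : ∫ r in s..(s + ε), G r =
      (f (s + ε) + (s + ε - (s + ε)) * f' (s + ε)) - (f s + (s + ε - s) * f' s) :=
    intervalIntegral.integral_eq_sub_of_hasDerivAt hderivg hGint
  have hkey2 : ε * f' s = f (s + ε) - f s - ∫ r in s..(s + ε), G r := by
    rw [hkey]; ring
  -- bound the remainder
  have hR : |∫ r in s..(s + ε), G r| ≤ |ε| * (N * |∫ r in s..(s + ε), (a r)⁻¹|) := by
    have := intervalIntegral.norm_integral_le_abs_of_norm_le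
      hGbd hainv
    rw [Real.norm_eq_abs] at this
    refine this.trans ?_
    rw [intervalIntegral.integral_const_mul, intervalIntegral.integral_const_mul,
      abs_mul, abs_mul, abs_of_nonneg (abs_nonneg ε), abs_of_nonneg hN0]
  -- endpoints are bounded by M
  have hMs : |f s| ≤ M := hM s ⟨hs.1.le, hs.2.le⟩
  have hMsε : |f (s + ε)| ≤ M := hM (s + ε) ⟨hsε.1.le, hsε.2.le⟩
  -- combine
  have hmain : |ε| * |f' s| ≤ 2 * M + |ε| * (N * |∫ r in s..(s + ε), (a r)⁻¹|) := by
    rw [← abs_mul, hkey2]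
    calc |f (s + ε) - f s - ∫ r in s..(s + ε), G r|
        ≤ |f (s + ε)| + |f s| + |∫ r in s..(s + ε), G r| := by
          exact (abs_sub _ _).trans (by gcongr; exact abs_sub _ _)
      _ ≤ 2 * M + |ε| * (N * |∫ r in s..(s + ε), (a r)⁻¹|) := by linarith
  rw [← mul_le_mul_iff_right₀ hεpos]
  have : |ε| * (2 / |ε| * M + N * |∫ r in s..(s + ε), (a r)⁻¹|) =
      2 * M + |ε| * (N * |∫ r in s..(s + ε), (a r)⁻¹|) := by
    field_simp
  rw [this]
  exact hmain
end

section
/- Let f : [0,1] → ℝ be continuous and twice differentiable on (0,1), let a : (0,1) → (0,∞) be continuous with N := sup_{r∈(0,1)} |a(r)·f''(r)| < ∞, and suppose there are δ ∈ (0,1] and M ≥ 0 such that |∫_s^t dr/a(r)| ≤ M·|t − s|^δ for all s, t ∈ (0,1). Set α := 1/(1+δ). Then for every ρ > 2^{1+δ} and every s ∈ (0,1): |f'(s)| ≤ (M + 2)·(ρ^α · sup_{t∈[0,1]} |f(t)| + ρ^{α−1} · N). -/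
open Set MeasureTheory intervalIntegral in
lemma holder_aux (f' f'' a : ℝ → ℝ) (δ M N : ℝ) (hM : 0 ≤ M) (hN : 0 ≤ N)
    (hf'' : ∀ x ∈ Set.Ioo (0:ℝ) 1, HasDerivAt f' (f'' x) x)
    (ha : ContinuousOn a (Set.Ioo 0 1))
    (hapos : ∀ r ∈ Set.Ioo (0:ℝ) 1, 0 < a r)
    (hNbd : ∀ r ∈ Set.Ioo (0:ℝ) 1, |a r * f'' r| ≤ N)
    (hHolder : ∀ s ∈ Set.Ioo (0:ℝ) 1, ∀ t ∈ Set.Ioo (0:ℝ) 1,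
      |∫ r in s..t, (a r)⁻¹| ≤ M * |t - s| ^ δ) :
    ∀ u ∈ Set.Ioo (0:ℝ) 1, ∀ v ∈ Set.Ioo (0:ℝ) 1, u ≤ v →
      |f' v - f' u| ≤ N * (M * (v - u) ^ δ) := by
  intro u hu v hv huv
  have hsub : Icc u v ⊆ Ioo (0:ℝ) 1 := fun x hx =>
    ⟨lt_of_lt_of_le hu.1 hx.1, lt_of_le_of_lt hx.2 hv.2⟩
  have hane : ∀ x ∈ Icc u v, a x ≠ 0 := fun x hx => (hapos x (hsub hx)).ne'
  have hcont : ContinuousOn (fun r => (a r)⁻¹) (Icc u v) := (ha.mono hsub).inv₀ hane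
  have hint_inv : IntervalIntegrable (fun r => (a r)⁻¹) volume u v := by
    apply ContinuousOn.intervalIntegrable
    rwa [uIcc_of_le huv]
  have hint_Ninv : IntervalIntegrable (fun r => N * (a r)⁻¹) volume u v :=
    hint_inv.const_mul N
  have hbd : ∀ r ∈ Icc u v, |f'' r| ≤ N * (a r)⁻¹ := by
    intro r hr
    have hpos := hapos r (hsub hr)
    have h1 : a r * |f'' r| ≤ N := by
      have := hNbd r (hsub hr)
      rwa [abs_mul, abs_of_pos hpos] at this
    rw [← div_eq_mul_inv, le_div_iff₀ hpos]
    linarith [h1, mul_comm (a r) |f'' r|]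
  -- measurability of f'' on the interval
  have heq : EqOn f'' (deriv f') (Ioo (0:ℝ) 1) := fun x hx => ((hf'' x hx).deriv).symm
  have hmeas : AEStronglyMeasurable f'' (volume.restrict (Icc u v)) := by
    refine (measurable_deriv f').aestronglyMeasurable.congr ?_
    refine (ae_restrict_iff' measurableSet_Icc).mpr (Filter.Eventually.of_forall ?_)
    intro x hx
    exact (heq (hsub hx)).symm
  have hint_f'' : IntervalIntegrable f'' volume u v := by
    rw [intervalIntegrable_iff_integrableOn_Icc_of_le huv]
    have hgint : IntegrableOn (fun r => N * (a r)⁻¹) (Icc u v) :=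
      (continuousOn_const.mul hcont).integrableOn_Icc
    refine hgint.mono' hmeas ?_
    · refine (ae_restrict_iff' measurableSet_Icc).mpr (Filter.Eventually.of_forall ?_)
      intro x hx
      simpa using hbd x hx
  -- FTC
  have hftc : ∫ r in u..v, f'' r = f' v - f' u := by
    refine integral_eq_sub_of_hasDerivAt (fun x hx => hf'' x (hsub ?_)) hint_f''
    rwa [uIcc_of_le huv] at hx
  rw [← hftc]
  calc |∫ r in u..v, f'' r| ≤ ∫ r in u..v, |f'' r| :=
        intervalIntegral.abs_integral_le_integral_abs huv
    _ ≤ ∫ r in u..v, N * (a r)⁻¹ := by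
        refine integral_mono_on huv hint_f''.abs hint_Ninv ?_
        exact hbd
    _ = N * ∫ r in u..v, (a r)⁻¹ := by rw [intervalIntegral.integral_const_mul]
    _ ≤ N * (M * (v - u) ^ δ) := by
        refine mul_le_mul_of_nonneg_left ?_ hN
        have h1 : |∫ r in u..v, (a r)⁻¹| ≤ M * |v - u| ^ δ := hHolder u hu v hv
        have h2 : (0:ℝ) ≤ ∫ r in u..v, (a r)⁻¹ := by
          refine integral_nonneg huv ?_
          intro x hx
          exact (inv_pos.mpr (hapos x (hsub hx))).le
        rw [abs_of_nonneg h2] at h1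
        rwa [abs_of_nonneg (by linarith : (0:ℝ) ≤ v - u)] at h1

open Set MeasureTheory in
/-- **Gradient estimate under a Hölder condition on the antiderivative of `1/a`.**
Let `f : [0,1] → ℝ` be continuous and twice differentiable on `(0,1)`, let
`a : (0,1) → (0,∞)` be continuous with `N = sup_{r ∈ (0,1)} |a(r) f''(r)| < ∞`, and
suppose `|∫_s^t dr/a(r)| ≤ M |t-s|^δ` for all `s, t ∈ (0,1)`, where `δ ∈ (0,1]`, `M ≥ 0`.
Set `α = 1/(1+δ)`.  Then for every `ρ > 2^{1+δ}` and every `s ∈ (0,1)`: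
`|f'(s)| ≤ (M+2) (ρ^α sup_{t ∈ [0,1]} |f(t)| + ρ^{α-1} N)`. -/
theorem stmt_12 (f f' f'' a : ℝ → ℝ) (δ M : ℝ)
    (hδ1 : 0 < δ) (hδ2 : δ ≤ 1) (hM : 0 ≤ M)
    (hf : ContinuousOn f (Set.Icc 0 1))
    (hf' : ∀ x ∈ Set.Ioo (0 : ℝ) 1, HasDerivAt f (f' x) x)
    (hf'' : ∀ x ∈ Set.Ioo (0 : ℝ) 1, HasDerivAt f' (f'' x) x)
    (ha : ContinuousOn a (Set.Ioo 0 1))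
    (hapos : ∀ r ∈ Set.Ioo (0 : ℝ) 1, 0 < a r)
    (hbdd : BddAbove ((fun r => |a r * f'' r|) '' Set.Ioo (0 : ℝ) 1))
    (hHolder : ∀ s ∈ Set.Ioo (0 : ℝ) 1, ∀ t ∈ Set.Ioo (0 : ℝ) 1,
      |∫ r in s..t, (a r)⁻¹| ≤ M * |t - s| ^ δ) :
    ∀ ρ : ℝ, (2 : ℝ) ^ (1 + δ) < ρ → ∀ s ∈ Set.Ioo (0 : ℝ) 1,
      |f' s| ≤ (M + 2) *
        (ρ ^ (1 / (1 + δ)) * sSup ((fun t => |f t|) '' Set.Icc (0 : ℝ) 1) +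
          ρ ^ (1 / (1 + δ) - 1) * sSup ((fun r => |a r * f'' r|) '' Set.Ioo (0 : ℝ) 1)) := by
  intro ρ hρ s hs
  set α : ℝ := 1 / (1 + δ) with hα
  set F : ℝ := sSup ((fun t => |f t|) '' Set.Icc (0 : ℝ) 1) with hFdef
  set N : ℝ := sSup ((fun r => |a r * f'' r|) '' Set.Ioo (0 : ℝ) 1) with hNdef
  have h1δ : (0:ℝ) < 1 + δ := by linarith
  have hα0 : 0 < α := by positivity
  have hρ0 : (0:ℝ) < ρ := lt_trans (Real.rpow_pos_of_pos two_pos _) hρ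
  -- bounds via sSup
  have hbddF : BddAbove ((fun t => |f t|) '' Set.Icc (0 : ℝ) 1) :=
    (isCompact_Icc.image_of_continuousOn hf.abs).bddAbove
  have hF : ∀ t ∈ Icc (0:ℝ) 1, |f t| ≤ F := fun t ht => le_csSup hbddF ⟨t, ht, rfl⟩
  have hN : ∀ r ∈ Ioo (0:ℝ) 1, |a r * f'' r| ≤ N := fun r hr => le_csSup hbdd ⟨r, hr, rfl⟩
  have hF0 : 0 ≤ F := le_trans (abs_nonneg _) (hF s (Ioo_subset_Icc_self hs))
  have hN0 : 0 ≤ N := le_trans (abs_nonneg _) (hN s hs)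
  have hold := holder_aux f' f'' a δ M N hM hN0 hf'' ha hapos hN hHolder
  -- the step size
  set h : ℝ := ρ ^ (-α) with hh
  have hhpos : 0 < h := Real.rpow_pos_of_pos hρ0 _
  have hρα : (2:ℝ) < ρ ^ α := by
    have h2 : ((2:ℝ) ^ (1 + δ)) ^ α < ρ ^ α :=
      Real.rpow_lt_rpow (Real.rpow_nonneg (by norm_num) _) hρ hα0
    have h3 : ((2:ℝ) ^ (1 + δ)) ^ α = 2 := by
      rw [← Real.rpow_mul (by norm_num : (0:ℝ) ≤ 2)]
      rw [hα, mul_one_div, div_self h1δ.ne', Real.rpow_one]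
    rwa [h3] at h2
  have hhinv : h = (ρ ^ α)⁻¹ := by rw [hh, Real.rpow_neg hρ0.le]
  have hhlt : h < 1/2 := by
    rw [hhinv]
    rw [inv_lt_comm₀ (by positivity) (by norm_num)]
    simpa using hρα
  have hhδ : h ^ δ = ρ ^ (α - 1) := by
    rw [hh, ← Real.rpow_mul hρ0.le]
    congr 1
    have hx : (1+δ) * (1+δ)⁻¹ = 1 := mul_inv_cancel₀ h1δ.ne'
    simp only [hα]
    rw [one_div]
    linear_combination -hx
  have hρα1 : (0:ℝ) < ρ ^ (α - 1) := Real.rpow_pos_of_pos hρ0 _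
  have hραpos : (0:ℝ) < ρ ^ α := Real.rpow_pos_of_pos hρ0 _
  -- key final comparison
  have hfinal : 2 * F / h + N * (M * h ^ δ) ≤ (M + 2) * (ρ ^ α * F + ρ ^ (α - 1) * N) := by
    rw [hhδ, hhinv, div_eq_mul_inv, inv_inv]
    nlinarith [mul_nonneg hM (mul_nonneg hF0 hραpos.le), mul_nonneg hN0 hρα1.le,
      mul_nonneg (mul_nonneg hM hN0) hρα1.le]
  -- main case split
  have key : |f' s| ≤ 2 * F / h + N * (M * h ^ δ) := by
    rcases le_or_gt s (1/2) with hcase | hcase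
    · -- go right: interval [s, s+h]
      have hst : s < s + h := by linarith
      have ht1 : s + h < 1 := by linarith
      have htmem : s + h ∈ Ioo (0:ℝ) 1 := ⟨by linarith [hs.1], ht1⟩
      have hsubI : Icc s (s+h) ⊆ Icc (0:ℝ) 1 := Icc_subset_Icc hs.1.le ht1.le
      obtain ⟨c, hc, hceq⟩ := exists_hasDerivAt_eq_slope f f' hst (hf.mono hsubI)
        (fun x hx => hf' x ⟨lt_trans hs.1 hx.1, lt_trans hx.2 ht1⟩)
      have hcmem : c ∈ Ioo (0:ℝ) 1 := ⟨lt_trans hs.1 hc.1, lt_trans hc.2 ht1⟩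
      have habs : |f (s+h) - f s| ≤ 2 * F := by
        have h2 := hF s (Ioo_subset_Icc_self hs)
        have h3 := hF (s+h) (Ioo_subset_Icc_self htmem)
        calc |f (s+h) - f s| ≤ |f (s+h)| + |f s| := abs_sub _ _
          _ ≤ 2 * F := by linarith
      have h1 : |f' c| ≤ 2 * F / h := by
        rw [hceq, show s + h - s = h by ring, abs_div, abs_of_pos hhpos]
        gcongr
      have h2 : |f' s - f' c| ≤ N * (M * h ^ δ) := by
        rw [abs_sub_comm]
        refine (hold s hs c hcmem hc.1.le).trans ?_
        have : (c - s) ^ δ ≤ h ^ δ :=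
          Real.rpow_le_rpow (by linarith [hc.1]) (by linarith [hc.2]) hδ1.le
        exact mul_le_mul_of_nonneg_left (mul_le_mul_of_nonneg_left this hM) hN0
      have h3 : |f' s| ≤ |f' c| + |f' s - f' c| := by
        calc |f' s| = |f' c + (f' s - f' c)| := by congr 1; ring
          _ ≤ |f' c| + |f' s - f' c| := abs_add_le _ _
      linarith
    · -- go left: interval [s-h, s]
      have hst : s - h < s := by linarith
      have ht0 : 0 < s - h := by linarith
      have htmem : s - h ∈ Ioo (0:ℝ) 1 := ⟨ht0, by linarith [hs.2]⟩
      have hsubI : Icc (s-h) s ⊆ Icc (0:ℝ) 1 := Icc_subset_Icc ht0.le hs.2.le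
      obtain ⟨c, hc, hceq⟩ := exists_hasDerivAt_eq_slope f f' hst (hf.mono hsubI)
        (fun x hx => hf' x ⟨lt_trans ht0 hx.1, lt_trans hx.2 hs.2⟩)
      have hcmem : c ∈ Ioo (0:ℝ) 1 := ⟨lt_trans ht0 hc.1, lt_trans hc.2 hs.2⟩
      have habs : |f s - f (s-h)| ≤ 2 * F := by
        have h2 := hF s (Ioo_subset_Icc_self hs)
        have h3 := hF (s-h) (Ioo_subset_Icc_self htmem)
        calc |f s - f (s-h)| ≤ |f s| + |f (s-h)| := abs_sub _ _
          _ ≤ 2 * F := by linarith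
      have h1 : |f' c| ≤ 2 * F / h := by
        rw [hceq, show s - (s - h) = h by ring, abs_div, abs_of_pos hhpos]
        gcongr
      have h2 : |f' s - f' c| ≤ N * (M * h ^ δ) := by
        refine (hold c hcmem s hs hc.2.le).trans ?_
        have : (s - c) ^ δ ≤ h ^ δ :=
          Real.rpow_le_rpow (by linarith [hc.2]) (by linarith [hc.1]) hδ1.le
        exact mul_le_mul_of_nonneg_left (mul_le_mul_of_nonneg_left this hM) hN0
      have h3 : |f' s| ≤ |f' c| + |f' s - f' c| := by
        calc |f' s| = |f' c + (f' s - f' c)| := by congr 1; ring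
          _ ≤ |f' c| + |f' s - f' c| := abs_add_le _ _
      linarith
  linarith
end

section
/- Let f : [0,1] → ℝ be continuous and twice differentiable on (0,1), and let a : (0,1) → (0,∞) be continuous with ∫₀¹ dr/a(r) < ∞ and N := sup_{r∈(0,1)} |a(r)·f''(r)| < ∞. Then f'' is Lebesgue integrable on (0,1), f'(t) − f'(s) = ∫_s^t f''(r) dr for all s, t ∈ (0,1), and f' has finite limits at 0⁺ and at 1⁻; in particular f' extends to a continuous function on [0,1]. -/
open MeasureTheory

/-- **Continuous extension of the derivative up to the boundary.**
Let `f : [0,1] → ℝ` be continuous and twice differentiable on `(0,1)`, and let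
`a : (0,1) → (0,∞)` be continuous with `∫₀¹ dr/a(r) < ∞` and
`N = sup_{r ∈ (0,1)} |a(r) f''(r)| < ∞`.  Then `f''` is Lebesgue integrable on `(0,1)`,
`f'(t) - f'(s) = ∫_s^t f''(r) dr` for all `s, t ∈ (0,1)`, and `f'` has finite limits at
`0⁺` and `1⁻`; in particular `f'` extends to a continuous function on `[0,1]`. -/
theorem stmt_13 (f f' f'' a : ℝ → ℝ)
    (hf : ContinuousOn f (Set.Icc 0 1))
    (hf' : ∀ x ∈ Set.Ioo (0 : ℝ) 1, HasDerivAt f (f' x) x)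
    (hf'' : ∀ x ∈ Set.Ioo (0 : ℝ) 1, HasDerivAt f' (f'' x) x)
    (ha : ContinuousOn a (Set.Ioo 0 1))
    (hapos : ∀ r ∈ Set.Ioo (0 : ℝ) 1, 0 < a r)
    (hainv : IntegrableOn (fun r => (a r)⁻¹) (Set.Ioo (0 : ℝ) 1) volume)
    (hbdd : BddAbove ((fun r => |a r * f'' r|) '' Set.Ioo (0 : ℝ) 1)) :
    IntegrableOn f'' (Set.Ioo (0 : ℝ) 1) volume ∧
    (∀ s ∈ Set.Ioo (0 : ℝ) 1, ∀ t ∈ Set.Ioo (0 : ℝ) 1,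
      f' t - f' s = ∫ r in s..t, f'' r) ∧
    (∃ l₀ : ℝ, Filter.Tendsto f' (nhdsWithin 0 (Set.Ioo (0 : ℝ) 1)) (nhds l₀)) ∧
    (∃ l₁ : ℝ, Filter.Tendsto f' (nhdsWithin 1 (Set.Ioo (0 : ℝ) 1)) (nhds l₁)) ∧
    (∃ g : ℝ → ℝ, ContinuousOn g (Set.Icc (0 : ℝ) 1) ∧
      ∀ s ∈ Set.Ioo (0 : ℝ) 1, g s = f' s) := by
  obtain ⟨N, hN⟩ := hbdd
  have hNbd : ∀ r ∈ Set.Ioo (0 : ℝ) 1, |f'' r| ≤ N * (a r)⁻¹ := by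
    intro r hr
    have h1 : |a r * f'' r| ≤ N := hN (Set.mem_image_of_mem _ hr)
    have h2 := hapos r hr
    rw [abs_mul, abs_of_pos h2] at h1
    calc |f'' r| = (a r * |f'' r|) * (a r)⁻¹ := by field_simp
      _ ≤ N * (a r)⁻¹ := by
          apply mul_le_mul_of_nonneg_right h1 (le_of_lt (inv_pos.mpr h2))
  -- measurability
  have hmeas : AEStronglyMeasurable f'' (volume.restrict (Set.Ioo (0 : ℝ) 1)) := by
    have hae : ∀ᵐ r ∂(volume.restrict (Set.Ioo (0 : ℝ) 1)), deriv f' r = f'' r := by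
      filter_upwards [ae_restrict_mem measurableSet_Ioo] with r hr
      exact (hf'' r hr).deriv
    exact (measurable_deriv f').aestronglyMeasurable.congr hae
  -- integrability
  have hint : IntegrableOn f'' (Set.Ioo (0 : ℝ) 1) volume := by
    refine Integrable.mono (hainv.const_mul N) hmeas ?_
    filter_upwards [ae_restrict_mem measurableSet_Ioo] with r hr
    calc ‖f'' r‖ = |f'' r| := rfl
      _ ≤ N * (a r)⁻¹ := hNbd r hr
      _ ≤ ‖N * (a r)⁻¹‖ := le_abs_self _
  -- FTC
  have hftc : ∀ s ∈ Set.Ioo (0 : ℝ) 1, ∀ t ∈ Set.Ioo (0 : ℝ) 1,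
      f' t - f' s = ∫ r in s..t, f'' r := by
    intro s hs t ht
    have hsub : Set.uIcc s t ⊆ Set.Ioo (0 : ℝ) 1 := by
      rw [Set.uIcc_eq_union]
      exact Set.union_subset (Set.Icc_subset_Ioo hs.1 ht.2) (Set.Icc_subset_Ioo ht.1 hs.2)
    have hii : IntervalIntegrable f'' volume s t := by
      rw [intervalIntegrable_iff]
      exact hint.mono_set (Set.uIoc_subset_uIcc.trans hsub)
    exact (intervalIntegral.integral_eq_sub_of_hasDerivAt
      (fun x hx => hf'' x (hsub hx)) hii).symm
  -- integrability on Icc 0 1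
  have hintIcc : IntegrableOn f'' (Set.Icc (0 : ℝ) 1) volume :=
    (integrableOn_Icc_iff_integrableOn_Ioo).mpr hint
  -- the extension
  set g : ℝ → ℝ := fun x => f' (1/2) + ∫ r in (1/2 : ℝ)..x, f'' r with hgdef
  have half_mem : (1/2 : ℝ) ∈ Set.Ioo (0 : ℝ) 1 := by norm_num
  have hgcont : ContinuousOn g (Set.Icc (0 : ℝ) 1) := by
    apply continuousOn_const.add
    have := intervalIntegral.continuousOn_primitive_interval'
      (μ := volume) (f := f'') (b₁ := (0:ℝ)) (b₂ := 1) (a := 1/2)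
      ?_ ?_
    · simpa [Set.uIcc_of_le (by norm_num : (0:ℝ) ≤ 1)] using this
    · rw [intervalIntegrable_iff, Set.uIoc_of_le (by norm_num : (0:ℝ) ≤ 1)]
      exact hintIcc.mono_set Set.Ioc_subset_Icc_self
    · rw [Set.uIcc_of_le (by norm_num : (0:ℝ) ≤ 1)]
      constructor <;> norm_num
  have hgeq : ∀ s ∈ Set.Ioo (0 : ℝ) 1, g s = f' s := by
    intro s hs
    have := hftc (1/2) half_mem s hs
    simp only [hgdef]
    linarith
  refine ⟨hint, hftc, ?_, ?_, g, hgcont, hgeq⟩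
  · refine ⟨g 0, ?_⟩
    have h0 : Filter.Tendsto g (nhdsWithin 0 (Set.Ioo (0:ℝ) 1)) (nhds (g 0)) :=
      (hgcont.continuousWithinAt (by constructor <;> norm_num)).mono
        Set.Ioo_subset_Icc_self
    refine h0.congr' ?_
    filter_upwards [self_mem_nhdsWithin] with x hx using hgeq x hx
  · refine ⟨g 1, ?_⟩
    have h1 : Filter.Tendsto g (nhdsWithin 1 (Set.Ioo (0:ℝ) 1)) (nhds (g 1)) :=
      (hgcont.continuousWithinAt (by constructor <;> norm_num)).mono
        Set.Ioo_subset_Icc_self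
    refine h1.congr' ?_
    filter_upwards [self_mem_nhdsWithin] with x hx using hgeq x hx
end

section
/- For every λ > 0 and every p ∈ [1, ∞): λ^{(p+1)/(2p)} · ( ∫₀^π |sinh(√λ·(s − π)) / (√λ · cosh(π√λ))|^p ds )^{1/p} ≤ 1. In fact the left-hand side is bounded by e^{π√λ} / (2·p^{1/p}·cosh(π√λ)) ≤ 1. -/
open Real intervalIntegral

/-- **Uniform bound on the Dirichlet operators `λ^{(p+1)/(2p)} L_λ`.**
For every `λ > 0` and `p ∈ [1,∞)`:
`λ^{(p+1)/(2p)} (∫₀^π |sinh(√λ (s-π)) / (√λ cosh(π √λ))|^p ds)^{1/p}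
  ≤ e^{π √λ} / (2 p^{1/p} cosh(π √λ)) ≤ 1`. -/
theorem stmt_15 (l p : ℝ) (hl : 0 < l) (hp : 1 ≤ p) :
    l ^ ((p + 1) / (2 * p)) *
        (∫ s in (0 : ℝ)..Real.pi,
            |Real.sinh (Real.sqrt l * (s - Real.pi)) /
              (Real.sqrt l * Real.cosh (Real.pi * Real.sqrt l))| ^ p) ^ (1 / p) ≤
      Real.exp (Real.pi * Real.sqrt l) /
        (2 * p ^ (1 / p) * Real.cosh (Real.pi * Real.sqrt l)) ∧
    Real.exp (Real.pi * Real.sqrt l) /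
        (2 * p ^ (1 / p) * Real.cosh (Real.pi * Real.sqrt l)) ≤ 1 := by
  have hp0 : (0 : ℝ) < p := lt_of_lt_of_le one_pos hp
  set μ := Real.sqrt l with hμdef
  have hμ : 0 < μ := Real.sqrt_pos.mpr hl
  set c := Real.cosh (Real.pi * μ) with hcdef
  have hc : 0 < c := by rw [hcdef]; exact Real.cosh_pos _
  have hp1 : (1:ℝ) ≤ p ^ (1/p) := Real.one_le_rpow hp (by positivity)
  have hp1' : (0:ℝ) < p ^ (1/p) := lt_of_lt_of_le one_pos hp1
  constructor
  · -- main estimate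
    -- pointwise bound
    have key : ∀ s ∈ Set.Icc (0:ℝ) Real.pi,
        |Real.sinh (μ * (s - Real.pi)) / (μ * c)| ^ p
          ≤ Real.exp (p * μ * (Real.pi - s)) / (2 * μ * c) ^ p := by
      intro s hs
      have h1 : |Real.sinh (μ * (s - Real.pi)) / (μ * c)|
          ≤ Real.exp (μ * (Real.pi - s)) / (2 * μ * c) := by
        rw [abs_div, abs_of_pos (by positivity : (0:ℝ) < μ * c), Real.abs_sinh]
        have habs : |μ * (s - Real.pi)| = μ * (Real.pi - s) := by
          rw [abs_mul, abs_of_pos hμ, abs_of_nonpos (by nlinarith [hs.2] : s - Real.pi ≤ 0)]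
          ring
        rw [habs]
        have hsinh : Real.sinh (μ * (Real.pi - s)) ≤ Real.exp (μ * (Real.pi - s)) / 2 := by
          rw [Real.sinh_eq]
          have := Real.exp_pos (-(μ * (Real.pi - s)))
          linarith
        rw [div_le_div_iff₀ (by positivity) (by positivity)]
        calc Real.sinh (μ * (Real.pi - s)) * (2 * μ * c)
            ≤ (Real.exp (μ * (Real.pi - s)) / 2) * (2 * μ * c) := by
              apply mul_le_mul_of_nonneg_right hsinh (by positivity)
          _ = Real.exp (μ * (Real.pi - s)) * (μ * c) := by ring
      calc |Real.sinh (μ * (s - Real.pi)) / (μ * c)| ^ p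
          ≤ (Real.exp (μ * (Real.pi - s)) / (2 * μ * c)) ^ p :=
            Real.rpow_le_rpow (abs_nonneg _) h1 hp0.le
        _ = Real.exp (p * μ * (Real.pi - s)) / (2 * μ * c) ^ p := by
            rw [Real.div_rpow (Real.exp_pos _).le (by positivity),
              ← Real.exp_mul]
            ring_nf
    -- integrability and integral monotonicity
    have hcont1 : Continuous fun s : ℝ => |Real.sinh (μ * (s - Real.pi)) / (μ * c)| ^ p := by
      apply Continuous.rpow_const
      · exact (Real.continuous_sinh.comp (by continuity)).div_const _ |>.abs
      · intro x; right; exact hp0.le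
    have hcont2 : Continuous fun s : ℝ => Real.exp (p * μ * (Real.pi - s)) / (2 * μ * c) ^ p := by
      exact (Real.continuous_exp.comp (by continuity)).div_const _
    have hmono : (∫ s in (0:ℝ)..Real.pi, |Real.sinh (μ * (s - Real.pi)) / (μ * c)| ^ p)
        ≤ ∫ s in (0:ℝ)..Real.pi, Real.exp (p * μ * (Real.pi - s)) / (2 * μ * c) ^ p := by
      apply intervalIntegral.integral_mono_on Real.pi_pos.le
        (hcont1.intervalIntegrable _ _) (hcont2.intervalIntegrable _ _) key
    -- compute the upper integral
    have hcalc : (∫ s in (0:ℝ)..Real.pi, Real.exp (p * μ * (Real.pi - s)) / (2 * μ * c) ^ p)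
        ≤ Real.exp (p * μ * Real.pi) / (p * μ) / (2 * μ * c) ^ p := by
      rw [intervalIntegral.integral_div]
      apply div_le_div_of_nonneg_right ?_ (by positivity)
      have h1 : (∫ s in (0:ℝ)..Real.pi, Real.exp (p * μ * (Real.pi - s)))
          = ∫ s in (0:ℝ)..Real.pi, Real.exp (p * μ * s) := by
        have := intervalIntegral.integral_comp_sub_left (a := (0:ℝ)) (b := Real.pi)
          (fun s => Real.exp (p * μ * s)) Real.pi
        simpa using this
      rw [h1]
      have h2 : (p*μ) * (∫ s in (0:ℝ)..Real.pi, Real.exp (p * μ * s))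
          = ∫ s in (p*μ*0)..(p*μ*Real.pi), Real.exp s :=
        intervalIntegral.mul_integral_comp_mul_left (f := fun s => Real.exp s) (p*μ)
      have hk : (0:ℝ) < p * μ := by positivity
      rw [integral_exp] at h2
      rw [show (∫ s in (0:ℝ)..Real.pi, Real.exp (p * μ * s))
          = (Real.exp (p*μ*Real.pi) - Real.exp (p*μ*0)) / (p*μ) by
        rw [eq_div_iff hk.ne']; linear_combination h2]
      gcongr
      linarith [Real.exp_pos (p*μ*0)]
    have hInt : (∫ s in (0:ℝ)..Real.pi, |Real.sinh (μ * (s - Real.pi)) / (μ * c)| ^ p)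
        ≤ Real.exp (p * μ * Real.pi) / (p * μ) / (2 * μ * c) ^ p := le_trans hmono hcalc
    have hIntNonneg : (0:ℝ) ≤ ∫ s in (0:ℝ)..Real.pi,
        |Real.sinh (μ * (s - Real.pi)) / (μ * c)| ^ p := by
      apply intervalIntegral.integral_nonneg Real.pi_pos.le
      intro s _; positivity
    -- take the 1/p power
    have hpow : (∫ s in (0:ℝ)..Real.pi, |Real.sinh (μ * (s - Real.pi)) / (μ * c)| ^ p) ^ (1/p)
        ≤ (Real.exp (p * μ * Real.pi) / (p * μ) / (2 * μ * c) ^ p) ^ (1/p) :=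
      Real.rpow_le_rpow hIntNonneg hInt (by positivity)
    have hpowval : (Real.exp (p * μ * Real.pi) / (p * μ) / (2 * μ * c) ^ p) ^ (1/p)
        = Real.exp (μ * Real.pi) / (p * μ) ^ (1/p) / (2 * μ * c) := by
      rw [Real.div_rpow (by positivity) (by positivity),
          Real.div_rpow (Real.exp_pos _).le (by positivity),
          ← Real.exp_mul,
          ← Real.rpow_mul (by positivity : (0:ℝ) ≤ 2*μ*c),
          show p*μ*Real.pi*(1/p) = μ*Real.pi by field_simp,
          show p*(1/p) = 1 by field_simp, Real.rpow_one]
    -- the prefactor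
    have hl2 : l = μ ^ (2:ℝ) := by
      rw [show ((2:ℝ)) = ((2:ℕ):ℝ) by norm_num, Real.rpow_natCast, hμdef]
      exact (Real.sq_sqrt hl.le).symm
    have hpre : l ^ ((p + 1) / (2 * p)) = μ * μ ^ (1/p) := by
      rw [hl2, ← Real.rpow_mul hμ.le,
        show (2:ℝ) * ((p+1)/(2*p)) = 1 + 1/p by field_simp,
        Real.rpow_add hμ, Real.rpow_one]
    calc l ^ ((p + 1) / (2 * p)) *
          (∫ s in (0:ℝ)..Real.pi, |Real.sinh (μ * (s - Real.pi)) / (μ * c)| ^ p) ^ (1/p)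
        ≤ (μ * μ ^ (1/p)) * (Real.exp (μ * Real.pi) / (p * μ) ^ (1/p) / (2 * μ * c)) := by
          rw [hpre, ← hpowval]
          exact mul_le_mul_of_nonneg_left (hpowval ▸ hpow) (by positivity)
      _ = Real.exp (Real.pi * μ) / (2 * p ^ (1/p) * c) := by
          rw [Real.mul_rpow hp0.le hμ.le]
          have h2 : (μ:ℝ) ^ (1/p) ≠ 0 := by positivity
          field_simp
  · -- second part
    rw [div_le_one (by positivity)]
    have hcosh : Real.exp (Real.pi * μ) ≤ 2 * c := by
      rw [hcdef, Real.cosh_eq]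
      have := Real.exp_pos (-(Real.pi * μ))
      linarith
    calc Real.exp (Real.pi * μ) ≤ 2 * c := hcosh
      _ = 2 * 1 * c := by ring
      _ ≤ 2 * p ^ (1/p) * c := by
          apply mul_le_mul_of_nonneg_right ?_ hc.le
          nlinarith
end

section
/- Let 1 ≤ p < ∞, let ν be a finite positive Borel measure on [−π, 0], and let v : [−π,0] × [0,π] → ℝ be measurable with ∫_{[−π,0]} ∫₀^π |v(r,s)|^p ds dr < ∞. Then ∫₀^π ( ∫₀^π ∫_{[−π,−t]} |v(t + r, s)| dν(r) ds )^p dt ≤ π^{p−1} · (ν([−π,0]))^p · ∫_{[−π,0]} ∫₀^π |v(r,s)|^p ds dr. -/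
open MeasureTheory
open scoped ENNReal

private lemma ofReal_int_le {α : Type*} [MeasurableSpace α] (μ : Measure α) (f : α → ℝ)
    (hf : ∀ a, 0 ≤ f a) :
    ENNReal.ofReal (∫ a, f a ∂μ) ≤ ∫⁻ a, ENNReal.ofReal (f a) ∂μ := by
  by_cases hi : Integrable f μ
  · exact le_of_eq (ofReal_integral_eq_lintegral_ofReal hi (Filter.Eventually.of_forall hf))
  · simp [integral_undef hi]

private lemma holder_pow {α : Type*} [MeasurableSpace α] (μ : Measure α) {f : α → ℝ≥0∞}
    (hf : AEMeasurable f μ) {p : ℝ} (hp : 1 ≤ p) :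
    (∫⁻ a, f a ∂μ) ^ p ≤ μ Set.univ ^ (p - 1) * ∫⁻ a, f a ^ p ∂μ := by
  rcases eq_or_lt_of_le hp with h1 | h1
  · rw [← h1]; simp
  · have hpq : p.HolderConjugate (Real.conjExponent p) := Real.HolderConjugate.conjExponent h1
    have key := ENNReal.lintegral_mul_le_Lp_mul_Lq μ hpq hf
      (aemeasurable_const : AEMeasurable (fun _ => (1 : ℝ≥0∞)) μ)
    simp only [Pi.mul_apply, mul_one, ENNReal.one_rpow, lintegral_const,
      Measure.restrict_apply, MeasurableSet.univ, Set.univ_inter, one_mul] at key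
    calc (∫⁻ a, f a ∂μ) ^ p
        ≤ ((∫⁻ a, f a ^ p ∂μ) ^ (1 / p) * μ Set.univ ^ (1 / Real.conjExponent p)) ^ p :=
          ENNReal.rpow_le_rpow key (le_of_lt hpq.pos)
      _ = (∫⁻ a, f a ^ p ∂μ) * μ Set.univ ^ (p - 1) := by
          rw [ENNReal.mul_rpow_of_nonneg _ _ (le_of_lt hpq.pos), ← ENNReal.rpow_mul,
            ← ENNReal.rpow_mul, one_div_mul_cancel hpq.ne_zero, ENNReal.rpow_one,
            one_div, inv_mul_eq_div, hpq.div_conj_eq_sub_one]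
      _ = _ := mul_comm _ _

noncomputable section Stmt16Aux

private def Iset : Set ℝ := Set.Icc (-Real.pi) 0
private def Jset : Set ℝ := Set.Icc 0 Real.pi

variable (v : ℝ → ℝ → ℝ) (p : ℝ) (ν : Measure ℝ)

private def gE (u s : ℝ) : ℝ≥0∞ := ENNReal.ofReal |v u s|
private def GE (u s : ℝ) : ℝ≥0∞ := ENNReal.ofReal (|v u s| ^ p)
private def hB (t s : ℝ) : ℝ := ∫ r in Set.Icc (-Real.pi) (-t), |v (t + r) s| ∂ν
private def FB (t : ℝ) : ℝ := ∫ s in Jset, hB v ν t s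
private def WE (u : ℝ) : ℝ≥0∞ := ∫⁻ s in Jset, GE v p u s
private def TE : ℝ≥0∞ := ∫⁻ u in Iset, WE v p u

variable {v p}

private lemma vabs_meas (hv : Measurable (Function.uncurry v)) :
    Measurable fun q : ℝ × ℝ => |v q.1 q.2| := hv.abs

private lemma gE_meas (hv : Measurable (Function.uncurry v)) :
    Measurable fun q : ℝ × ℝ => gE v q.1 q.2 := (vabs_meas hv).ennreal_ofReal

private lemma GE_meas (hv : Measurable (Function.uncurry v)) (hp0 : 0 ≤ p) :
    Measurable fun q : ℝ × ℝ => GE v p q.1 q.2 :=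
  ((Real.continuous_rpow_const hp0).measurable.comp (vabs_meas hv)).ennreal_ofReal

private lemma GE_eq_pow (hp0 : 0 ≤ p) (u s : ℝ) : gE v u s ^ p = GE v p u s := by
  unfold gE GE
  exact ENNReal.ofReal_rpow_of_nonneg (abs_nonneg _) hp0

private lemma WE_meas (hv : Measurable (Function.uncurry v)) (hp0 : 0 ≤ p) :
    Measurable (WE v p) :=
  Measurable.lintegral_prod_right (f := fun u s => GE v p u s) (GE_meas hv hp0)

private lemma hB_nonneg (t s : ℝ) : 0 ≤ hB v ν t s :=
  integral_nonneg fun _ => abs_nonneg _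

private lemma FB_nonneg (t : ℝ) : 0 ≤ FB v ν t :=
  integral_nonneg fun s => hB_nonneg ν t s

private lemma hB_sm [SFinite ν] (hv : Measurable (Function.uncurry v)) :
    StronglyMeasurable fun q : ℝ × ℝ => hB v ν q.1 q.2 := by
  classical
  set S : Set ((ℝ × ℝ) × ℝ) := {z | z.2 ∈ Set.Icc (-Real.pi) (-z.1.1)} with hS
  have hSmeas : MeasurableSet S := by
    have : S = {z : (ℝ × ℝ) × ℝ | -Real.pi ≤ z.2} ∩ {z | z.2 ≤ -z.1.1} := by
      ext z; simp [hS, Set.mem_Icc, Set.mem_inter_iff]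
    rw [this]
    exact (measurableSet_le measurable_const measurable_snd).inter
      (measurableSet_le measurable_snd measurable_fst.fst.neg)
  set ψ : (ℝ × ℝ) × ℝ → ℝ := S.indicator fun z => |v (z.1.1 + z.2) z.1.2| with hψ
  have hψmeas : Measurable ψ :=
    ((vabs_meas hv).comp ((measurable_fst.fst.add measurable_snd).prodMk
      measurable_fst.snd)).indicator hSmeas
  have key : StronglyMeasurable fun q : ℝ × ℝ => ∫ r, ψ (q, r) ∂ν :=
    hψmeas.stronglyMeasurable.integral_prod_right'
  have heq : (fun q : ℝ × ℝ => hB v ν q.1 q.2) = fun q : ℝ × ℝ => ∫ r, ψ (q, r) ∂ν := by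
    funext q
    have hpt : ∀ r, ψ (q, r) =
        (Set.Icc (-Real.pi) (-q.1)).indicator (fun r => |v (q.1 + r) q.2|) r := by
      intro r
      by_cases hr : r ∈ Set.Icc (-Real.pi) (-q.1)
      · rw [Set.indicator_of_mem hr, hψ, Set.indicator_of_mem (show (q, r) ∈ S from hr)]
      · rw [Set.indicator_of_notMem hr, hψ, Set.indicator_of_notMem
          (show (q, r) ∉ S from hr)]
    calc hB v ν q.1 q.2
        = ∫ r, (Set.Icc (-Real.pi) (-q.1)).indicator (fun r => |v (q.1 + r) q.2|) r ∂ν :=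
          (integral_indicator measurableSet_Icc).symm
      _ = ∫ r, ψ (q, r) ∂ν :=
          integral_congr_ae (Filter.Eventually.of_forall fun r => (hpt r).symm)
  rw [heq]; exact key

private lemma FB_sm [SFinite ν] (hv : Measurable (Function.uncurry v)) :
    StronglyMeasurable (FB v ν) :=
  (hB_sm ν hv).integral_prod_right' (ν := volume.restrict Jset)

end Stmt16Aux


/-- **`p`-admissibility of the delay functional for the nilpotent left shift.**
Let `1 ≤ p < ∞`, let `ν` be a finite positive Borel measure on `[-π,0]`, and let
`v : [-π,0] × [0,π] → ℝ` be measurable with `∫_{[-π,0]} ∫₀^π |v(r,s)|^p ds dr < ∞`.  Then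
`∫₀^π (∫₀^π ∫_{[-π,-t]} |v(t+r,s)| dν(r) ds)^p dt
  ≤ π^{p-1} ν([-π,0])^p ∫_{[-π,0]} ∫₀^π |v(r,s)|^p ds dr`. -/
theorem stmt_16 (p : ℝ) (hp : 1 ≤ p) (ν : Measure ℝ) [IsFiniteMeasure ν]
    (v : ℝ → ℝ → ℝ) (hv : Measurable (Function.uncurry v))
    (hvint : IntegrableOn (fun q : ℝ × ℝ => |v q.1 q.2| ^ p)
      (Set.Icc (-Real.pi) 0 ×ˢ Set.Icc 0 Real.pi) volume) :
    ∫ t in Set.Icc (0 : ℝ) Real.pi,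
        (∫ s in Set.Icc (0 : ℝ) Real.pi,
            ∫ r in Set.Icc (-Real.pi) (-t), |v (t + r) s| ∂ν) ^ p
      ≤ Real.pi ^ (p - 1) * (ν (Set.Icc (-Real.pi) 0)).toReal ^ p *
          ∫ r in Set.Icc (-Real.pi) (0 : ℝ),
            ∫ s in Set.Icc (0 : ℝ) Real.pi, |v r s| ^ p := by
  have hπ : (0:ℝ) ≤ Real.pi := Real.pi_pos.le
  have hp0 : (0:ℝ) ≤ p := zero_le_one.trans hp
  have hImeas : MeasurableSet Iset := measurableSet_Icc
  have hJmeas : MeasurableSet Jset := measurableSet_Icc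
  show ∫ t in Jset, FB v ν t ^ p
      ≤ Real.pi ^ (p - 1) * (ν Iset).toReal ^ p * ∫ r in Iset, ∫ s in Jset, |v r s| ^ p
  -- integrability on the product
  have h1 : Integrable (fun q : ℝ × ℝ => |v q.1 q.2| ^ p)
      ((volume.restrict Iset).prod (volume.restrict Jset)) := by
    rw [Measure.prod_restrict, ← Measure.volume_eq_prod]
    exact hvint
  -- finiteness of TE
  have hTfin : TE v p ≠ ⊤ := by
    have heq : TE v p = ∫⁻ q : ℝ × ℝ, GE v p q.1 q.2
        ∂((volume.restrict Iset).prod (volume.restrict Jset)) :=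
      (lintegral_prod _ (GE_meas hv hp0).aemeasurable).symm
    have h2 : HasFiniteIntegral (fun q : ℝ × ℝ => |v q.1 q.2| ^ p)
        ((volume.restrict Iset).prod (volume.restrict Jset)) := h1.hasFiniteIntegral
    rw [hasFiniteIntegral_iff_norm] at h2
    rw [heq]
    refine ne_of_lt (lt_of_le_of_lt (le_of_eq (lintegral_congr fun q => ?_)) h2)
    rw [Real.norm_of_nonneg (Real.rpow_nonneg (abs_nonneg _) p)]
    rfl
  -- the RHS double integral equals (TE v p).toReal
  have hRHSeq : (∫ r in Iset, ∫ s in Jset, |v r s| ^ p) = (TE v p).toReal := by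
    have hΦnn : ∀ r, 0 ≤ ∫ s in Jset, |v r s| ^ p :=
      fun r => integral_nonneg fun s => Real.rpow_nonneg (abs_nonneg _) _
    have haesm : AEStronglyMeasurable (fun r => ∫ s in Jset, |v r s| ^ p)
        (volume.restrict Iset) := h1.aestronglyMeasurable.integral_prod_right'
    rw [integral_eq_lintegral_of_nonneg_ae (Filter.Eventually.of_forall hΦnn) haesm]
    congr 1
    refine lintegral_congr_ae ?_
    filter_upwards [h1.prod_right_ae] with r hr
    rw [ofReal_integral_eq_lintegral_ofReal hr
      (Filter.Eventually.of_forall fun s => Real.rpow_nonneg (abs_nonneg _) _)]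
    rfl
  -- LHS as a lintegral
  have hLHS : ∫ t in Jset, FB v ν t ^ p
      = (∫⁻ t in Jset, ENNReal.ofReal (FB v ν t ^ p)).toReal :=
    integral_eq_lintegral_of_nonneg_ae
      (Filter.Eventually.of_forall fun t => Real.rpow_nonneg (FB_nonneg ν t) p)
      (((Real.continuous_rpow_const hp0).measurable.comp
        (FB_sm ν hv).measurable).aestronglyMeasurable)
  -- pointwise bound via ofReal of integrals
  have hpt : ∀ t, ENNReal.ofReal (FB v ν t ^ p)
      ≤ (∫⁻ s in Jset, ∫⁻ r in Set.Icc (-Real.pi) (-t), gE v (t + r) s ∂ν) ^ p := by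
    intro t
    rw [← ENNReal.ofReal_rpow_of_nonneg (FB_nonneg ν t) hp0]
    refine ENNReal.rpow_le_rpow ?_ hp0
    calc ENNReal.ofReal (FB v ν t)
        ≤ ∫⁻ s in Jset, ENNReal.ofReal (hB v ν t s) :=
          ofReal_int_le _ _ (hB_nonneg ν t)
      _ ≤ _ := lintegral_mono fun s => ofReal_int_le _ _ fun r => abs_nonneg _
  -- measurability of the inner lintegral in s
  have mAt : ∀ t : ℝ,
      Measurable fun s => ∫⁻ r in Set.Icc (-Real.pi) (-t), gE v (t + r) s ∂ν :=
    fun t => Measurable.lintegral_prod_right (f := fun s r => gE v (t + r) s)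
      ((gE_meas hv).comp ((measurable_const.add measurable_snd).prodMk measurable_fst))
  -- Hölder in s
  have step1 : ∀ t : ℝ,
      (∫⁻ s in Jset, ∫⁻ r in Set.Icc (-Real.pi) (-t), gE v (t + r) s ∂ν) ^ p
        ≤ ENNReal.ofReal Real.pi ^ (p - 1) *
          ∫⁻ s in Jset, (∫⁻ r in Set.Icc (-Real.pi) (-t), gE v (t + r) s ∂ν) ^ p := by
    intro t
    have h := holder_pow (volume.restrict Jset) (mAt t).aemeasurable hp
    rwa [Measure.restrict_apply_univ, show Jset = Set.Icc (0:ℝ) Real.pi from rfl,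
      Real.volume_Icc, sub_zero] at h
  -- Hölder in r
  have step2 : ∀ t ∈ Jset, ∀ s : ℝ,
      (∫⁻ r in Set.Icc (-Real.pi) (-t), gE v (t + r) s ∂ν) ^ p
        ≤ ν Iset ^ (p - 1) * ∫⁻ r in Set.Icc (-Real.pi) (-t), GE v p (t + r) s ∂ν := by
    intro t ht s
    have ht0 : (0:ℝ) ≤ t := (Set.mem_Icc.mp ht).1
    have hmono : ν (Set.Icc (-Real.pi) (-t)) ≤ ν Iset :=
      measure_mono (Set.Icc_subset_Icc_right (neg_nonpos.mpr ht0))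
    have hm2 : Measurable fun r : ℝ => gE v (t + r) s :=
      (gE_meas hv).comp ((measurable_const.add measurable_id).prodMk measurable_const)
    have h2 := holder_pow (ν.restrict (Set.Icc (-Real.pi) (-t))) hm2.aemeasurable hp
    rw [Measure.restrict_apply_univ] at h2
    calc (∫⁻ r in Set.Icc (-Real.pi) (-t), gE v (t + r) s ∂ν) ^ p
        ≤ ν (Set.Icc (-Real.pi) (-t)) ^ (p - 1) *
            ∫⁻ r in Set.Icc (-Real.pi) (-t), gE v (t + r) s ^ p ∂ν := h2
      _ ≤ ν Iset ^ (p - 1) * ∫⁻ r in Set.Icc (-Real.pi) (-t), GE v p (t + r) s ∂ν := by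
          refine mul_le_mul' (ENNReal.rpow_le_rpow hmono (sub_nonneg.mpr hp)) ?_
          exact le_of_eq (lintegral_congr fun r => GE_eq_pow hp0 _ _)
  have hC2ne : ν Iset ^ (p - 1) ≠ ⊤ :=
    ENNReal.rpow_ne_top_of_nonneg (sub_nonneg.mpr hp) (measure_ne_top ν Iset)
  have hCne : ENNReal.ofReal Real.pi ^ (p - 1) * ν Iset ^ (p - 1) ≠ ⊤ :=
    ENNReal.mul_ne_top
      (ENNReal.rpow_ne_top_of_nonneg (sub_nonneg.mpr hp) ENNReal.ofReal_ne_top) hC2ne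
  have hstep : ∀ t ∈ Jset,
      (∫⁻ s in Jset, ∫⁻ r in Set.Icc (-Real.pi) (-t), gE v (t + r) s ∂ν) ^ p
        ≤ ENNReal.ofReal Real.pi ^ (p - 1) * ν Iset ^ (p - 1) *
          ∫⁻ s in Jset, ∫⁻ r in Set.Icc (-Real.pi) (-t), GE v p (t + r) s ∂ν := by
    intro t ht
    calc (∫⁻ s in Jset, ∫⁻ r in Set.Icc (-Real.pi) (-t), gE v (t + r) s ∂ν) ^ p
        ≤ ENNReal.ofReal Real.pi ^ (p - 1) *
          ∫⁻ s in Jset, (∫⁻ r in Set.Icc (-Real.pi) (-t), gE v (t + r) s ∂ν) ^ p := step1 t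
      _ ≤ ENNReal.ofReal Real.pi ^ (p - 1) *
          ∫⁻ s in Jset, ν Iset ^ (p - 1) *
            ∫⁻ r in Set.Icc (-Real.pi) (-t), GE v p (t + r) s ∂ν :=
          mul_le_mul_right (lintegral_mono fun s => step2 t ht s) _
      _ = _ := by rw [lintegral_const_mul' _ _ hC2ne, ← mul_assoc]
  -- the Fubini/translation step
  have step4 : (∫⁻ t in Jset, ∫⁻ s in Jset,
        ∫⁻ r in Set.Icc (-Real.pi) (-t), GE v p (t + r) s ∂ν)
      ≤ TE v p * ν Iset := by
    have hGm := GE_meas hv hp0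
    have h8ab : ∀ t : ℝ,
        (∫⁻ s in Jset, ∫⁻ r in Set.Icc (-Real.pi) (-t), GE v p (t + r) s ∂ν)
          = ∫⁻ r, (Set.Icc (-Real.pi) (-t)).indicator
              (fun r' => WE v p (t + r')) r ∂ν := by
      intro t
      have hm : Measurable (Function.uncurry fun s r : ℝ => GE v p (t + r) s) :=
        hGm.comp ((measurable_const.add measurable_snd).prodMk measurable_fst)
      have hswap := lintegral_lintegral_swap (μ := volume.restrict Jset)
        (ν := ν.restrict (Set.Icc (-Real.pi) (-t))) hm.aemeasurable
      calc (∫⁻ s in Jset, ∫⁻ r in Set.Icc (-Real.pi) (-t), GE v p (t + r) s ∂ν)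
          = ∫⁻ r in Set.Icc (-Real.pi) (-t), WE v p (t + r) ∂ν := by
            unfold WE
            exact hswap
        _ = ∫⁻ r, (Set.Icc (-Real.pi) (-t)).indicator (fun r' => WE v p (t + r')) r ∂ν :=
            (lintegral_indicator measurableSet_Icc _).symm
    have hS2 : MeasurableSet {z : ℝ × ℝ | z.2 ∈ Set.Icc (-Real.pi) (-z.1)} := by
      have h : {z : ℝ × ℝ | z.2 ∈ Set.Icc (-Real.pi) (-z.1)}
          = {z : ℝ × ℝ | -Real.pi ≤ z.2} ∩ {z : ℝ × ℝ | z.2 ≤ -z.1} := by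
        ext z; simp [Set.mem_Icc]
      rw [h]
      exact (measurableSet_le measurable_const measurable_snd).inter
        (measurableSet_le measurable_snd measurable_fst.neg)
    have hQmeas : Measurable (Function.uncurry fun t r =>
        (Set.Icc (-Real.pi) (-t)).indicator (fun r' => WE v p (t + r')) r) := by
      have hWm : Measurable fun z : ℝ × ℝ => WE v p (z.1 + z.2) :=
        (WE_meas hv hp0).comp (measurable_fst.add measurable_snd)
      have hfe : (Function.uncurry fun t r =>
          (Set.Icc (-Real.pi) (-t)).indicator (fun r' => WE v p (t + r')) r)
          = {z : ℝ × ℝ | z.2 ∈ Set.Icc (-Real.pi) (-z.1)}.indicator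
              (fun z => WE v p (z.1 + z.2)) := by
        funext z
        simp only [Function.uncurry]
        by_cases hz : z.2 ∈ Set.Icc (-Real.pi) (-z.1)
        · rw [Set.indicator_of_mem hz, Set.indicator_of_mem
            (show z ∈ {z : ℝ × ℝ | z.2 ∈ Set.Icc (-Real.pi) (-z.1)} from hz)]
        · rw [Set.indicator_of_notMem hz, Set.indicator_of_notMem
            (show z ∉ {z : ℝ × ℝ | z.2 ∈ Set.Icc (-Real.pi) (-z.1)} from hz)]
      rw [hfe]; exact hWm.indicator hS2
    have h8c : (∫⁻ t in Jset, ∫⁻ r,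
          (Set.Icc (-Real.pi) (-t)).indicator (fun r' => WE v p (t + r')) r ∂ν)
        = ∫⁻ r, (∫⁻ t in Jset,
          (Set.Icc (-Real.pi) (-t)).indicator (fun r' => WE v p (t + r')) r) ∂ν :=
      lintegral_lintegral_swap hQmeas.aemeasurable
    have h8d : ∀ r : ℝ, (∫⁻ t in Jset,
          (Set.Icc (-Real.pi) (-t)).indicator (fun r' => WE v p (t + r')) r)
        ≤ Set.indicator Iset (fun _ => TE v p) r := by
      intro r
      have hind_ne : Set.indicator Iset (fun _ => (1:ℝ≥0∞)) r ≠ ⊤ := by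
        by_cases h : r ∈ Iset <;> simp [h]
      calc (∫⁻ t in Jset, (Set.Icc (-Real.pi) (-t)).indicator
              (fun r' => WE v p (t + r')) r)
          ≤ ∫⁻ t in Jset, Set.indicator Iset (fun _ => (1:ℝ≥0∞)) r *
              Set.indicator Iset (WE v p) (t + r) := by
            refine lintegral_mono_ae ((ae_restrict_iff' hJmeas).2
              (Filter.Eventually.of_forall fun t ht => ?_))
            have ht' := Set.mem_Icc.mp ht
            by_cases hr : r ∈ Set.Icc (-Real.pi) (-t)
            · have hr' := Set.mem_Icc.mp hr
              rw [Set.indicator_of_mem hr]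
              have hrI : r ∈ Iset := Set.mem_Icc.mpr ⟨hr'.1, by linarith [ht'.1]⟩
              have htr : t + r ∈ Iset := Set.mem_Icc.mpr
                ⟨by linarith [hr'.1, ht'.1], by linarith [hr'.2]⟩
              rw [Set.indicator_of_mem hrI, Set.indicator_of_mem htr, one_mul]
            · rw [Set.indicator_of_notMem hr]; exact zero_le
        _ = Set.indicator Iset (fun _ => (1:ℝ≥0∞)) r *
              ∫⁻ t in Jset, Set.indicator Iset (WE v p) (t + r) :=
            lintegral_const_mul' _ _ hind_ne
        _ ≤ Set.indicator Iset (fun _ => (1:ℝ≥0∞)) r *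
              ∫⁻ t, Set.indicator Iset (WE v p) (t + r) :=
            mul_le_mul_right (setLIntegral_le_lintegral _ _) _
        _ = Set.indicator Iset (fun _ => (1:ℝ≥0∞)) r * TE v p := by
            rw [lintegral_add_right_eq_self (fun u => Set.indicator Iset (WE v p) u) r,
              lintegral_indicator hImeas]
            rfl
        _ = Set.indicator Iset (fun _ => TE v p) r := by
            by_cases h : r ∈ Iset <;> simp [h]
    calc (∫⁻ t in Jset, ∫⁻ s in Jset,
            ∫⁻ r in Set.Icc (-Real.pi) (-t), GE v p (t + r) s ∂ν)
        = ∫⁻ t in Jset, ∫⁻ r, (Set.Icc (-Real.pi) (-t)).indicator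
            (fun r' => WE v p (t + r')) r ∂ν := lintegral_congr fun t => h8ab t
      _ = ∫⁻ r, (∫⁻ t in Jset, (Set.Icc (-Real.pi) (-t)).indicator
            (fun r' => WE v p (t + r')) r) ∂ν := h8c
      _ ≤ ∫⁻ r, Set.indicator Iset (fun _ => TE v p) r ∂ν := lintegral_mono h8d
      _ = TE v p * ν Iset := lintegral_indicator_const hImeas _
  have hνpow : ν Iset ^ (p - 1) * ν Iset = ν Iset ^ p := by
    rcases eq_or_ne (ν Iset) 0 with h0 | h0
    · rw [h0, mul_zero, ENNReal.zero_rpow_of_pos (lt_of_lt_of_le zero_lt_one hp)]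
    · calc ν Iset ^ (p - 1) * ν Iset = ν Iset ^ (p - 1) * ν Iset ^ (1:ℝ) := by
            rw [ENNReal.rpow_one]
        _ = ν Iset ^ (p - 1 + 1) :=
            (ENNReal.rpow_add _ _ h0 (measure_ne_top ν Iset)).symm
        _ = _ := by rw [sub_add_cancel]
  have hRfin : ENNReal.ofReal Real.pi ^ (p - 1) * ν Iset ^ p * TE v p ≠ ⊤ :=
    ENNReal.mul_ne_top (ENNReal.mul_ne_top
      (ENNReal.rpow_ne_top_of_nonneg (sub_nonneg.mpr hp) ENNReal.ofReal_ne_top)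
      (ENNReal.rpow_ne_top_of_nonneg hp0 (measure_ne_top ν Iset))) hTfin
  have hmain : (∫⁻ t in Jset, ENNReal.ofReal (FB v ν t ^ p))
      ≤ ENNReal.ofReal Real.pi ^ (p - 1) * ν Iset ^ p * TE v p := by
    calc (∫⁻ t in Jset, ENNReal.ofReal (FB v ν t ^ p))
        ≤ ∫⁻ t in Jset, (∫⁻ s in Jset, ∫⁻ r in Set.Icc (-Real.pi) (-t),
            gE v (t + r) s ∂ν) ^ p := lintegral_mono hpt
      _ ≤ ∫⁻ t in Jset, ENNReal.ofReal Real.pi ^ (p - 1) * ν Iset ^ (p - 1) *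
            ∫⁻ s in Jset, ∫⁻ r in Set.Icc (-Real.pi) (-t), GE v p (t + r) s ∂ν :=
          lintegral_mono_ae ((ae_restrict_iff' hJmeas).2 (Filter.Eventually.of_forall hstep))
      _ = ENNReal.ofReal Real.pi ^ (p - 1) * ν Iset ^ (p - 1) *
            ∫⁻ t in Jset, ∫⁻ s in Jset, ∫⁻ r in Set.Icc (-Real.pi) (-t),
              GE v p (t + r) s ∂ν := lintegral_const_mul' _ _ hCne
      _ ≤ ENNReal.ofReal Real.pi ^ (p - 1) * ν Iset ^ (p - 1) * (TE v p * ν Iset) :=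
          mul_le_mul_right step4 _
      _ = ENNReal.ofReal Real.pi ^ (p - 1) * ν Iset ^ p * TE v p := by
          rw [← hνpow]; ring
  rw [hLHS, hRHSeq]
  calc (∫⁻ t in Jset, ENNReal.ofReal (FB v ν t ^ p)).toReal
      ≤ (ENNReal.ofReal Real.pi ^ (p - 1) * ν Iset ^ p * TE v p).toReal :=
        ENNReal.toReal_mono hRfin hmain
    _ = Real.pi ^ (p - 1) * (ν Iset).toReal ^ p * (TE v p).toReal := by
        rw [ENNReal.toReal_mul, ENNReal.toReal_mul, ← ENNReal.toReal_rpow,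
          ← ENNReal.toReal_rpow, ENNReal.toReal_ofReal hπ]
end

section
/- Let 1 ≤ p < ∞, let ν be a finite positive Borel measure on [−π, 0], and let u : [0,π] × [0,π] → ℝ be continuous with u(0, s) = 0 for every s ∈ [0,π]. Then ∫₀^π ( ∫₀^π ∫_{[−π,0]} |u(max(0, t + r), s)| dν(r) ds )^p dt ≤ π^{p−1} · (ν([−π,0]))^p · ∫₀^π ∫₀^π |u(t,s)|^p ds dt. -/
open MeasureTheory Set
open scoped ENNReal

lemma holder_pow_aux {α : Type*} [MeasurableSpace α] (μ : Measure α) {p : ℝ} (hp : 1 ≤ p)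
    {f : α → ℝ≥0∞} (hf : AEMeasurable f μ) :
    (∫⁻ a, f a ∂μ) ^ p ≤ μ Set.univ ^ (p - 1) * ∫⁻ a, f a ^ p ∂μ := by
  rcases eq_or_lt_of_le hp with heq | hlt
  · simp [← heq]
  · have hp0 : p ≠ 0 := by positivity
    set q := Real.conjExponent p with hq
    have hpq : p.HolderConjugate q := Real.HolderConjugate.conjExponent hlt
    have h1 : ∫⁻ a, f a ∂μ ≤ (∫⁻ a, f a ^ p ∂μ) ^ (1/p) * (μ Set.univ) ^ (1/q) := by
      have := ENNReal.lintegral_mul_le_Lp_mul_Lq μ hpq hf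
        (aemeasurable_const : AEMeasurable (fun _ : α => (1:ℝ≥0∞)) μ)
      simpa using this
    calc (∫⁻ a, f a ∂μ) ^ p
        ≤ ((∫⁻ a, f a ^ p ∂μ) ^ (1/p) * (μ Set.univ) ^ (1/q)) ^ p :=
          ENNReal.rpow_le_rpow h1 (le_of_lt hpq.pos)
      _ = (∫⁻ a, f a ^ p ∂μ) ^ ((1/p) * p) * (μ Set.univ) ^ ((1/q) * p) := by
          rw [ENNReal.mul_rpow_of_nonneg _ _ (le_of_lt hpq.pos), ← ENNReal.rpow_mul,
            ← ENNReal.rpow_mul]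
      _ = μ Set.univ ^ (p - 1) * ∫⁻ a, f a ^ p ∂μ := by
          rw [one_div, inv_mul_cancel₀ hp0, ENNReal.rpow_one]
          have : (1/q) * p = p - 1 := by
            rw [hq, Real.conjExponent]
            field_simp
          rw [this, mul_comm]

lemma shift_lintegral_le {f : ℝ → ℝ≥0∞} (hf0 : f 0 = 0)
    {r : ℝ} (hr : r ∈ Set.Icc (-Real.pi) (0:ℝ)) :
    ∫⁻ t in Set.Icc (0:ℝ) Real.pi, f (max 0 (t + r)) ≤ ∫⁻ t in Set.Icc (0:ℝ) Real.pi, f t := by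
  obtain ⟨hr1, hr2⟩ := hr
  have hsplit : Set.Ico (0:ℝ) (-r) ∪ Set.Icc (-r) Real.pi = Set.Icc 0 Real.pi :=
    Set.Ico_union_Icc_eq_Icc (by linarith) (by linarith)
  have hdisj : Disjoint (Set.Ico (0:ℝ) (-r)) (Set.Icc (-r) Real.pi) := by
    rw [Set.disjoint_left]
    rintro x ⟨-, hx2⟩ ⟨hx3, -⟩; linarith
  have h0 : ∫⁻ t in Set.Ico (0:ℝ) (-r), f (max 0 (t + r)) = 0 := by
    have : ∀ t ∈ Set.Ico (0:ℝ) (-r), f (max 0 (t + r)) = (0:ℝ≥0∞) := fun t ht => by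
      rw [max_eq_left (by linarith [ht.2] : t + r ≤ 0), hf0]
    rw [setLIntegral_congr_fun_ae measurableSet_Ico (Filter.Eventually.of_forall this)]
    simp
  have h1 : ∫⁻ t in Set.Icc (-r) Real.pi, f (max 0 (t + r))
      = ∫⁻ t in Set.Icc (0:ℝ) (Real.pi + r), f t := by
    have heq : ∀ t ∈ Set.Icc (-r) Real.pi, f (max 0 (t + r)) = f (t + r) := fun t ht => by
      rw [max_eq_right (by linarith [ht.1] : (0:ℝ) ≤ t + r)]
    rw [setLIntegral_congr_fun_ae measurableSet_Icc (Filter.Eventually.of_forall heq)]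
    have := (measurePreserving_add_right (volume : Measure ℝ) r).setLIntegral_comp_emb
      (measurableEmbedding_addRight r) f (Set.Icc (-r) Real.pi)
    rw [this]
    congr 1
    rw [show ((· + r) '' Set.Icc (-r) Real.pi) = Set.Icc (0:ℝ) (Real.pi + r) by
      rw [Set.image_add_const_Icc]; norm_num]
  calc ∫⁻ t in Set.Icc (0:ℝ) Real.pi, f (max 0 (t + r))
      = (∫⁻ t in Set.Ico (0:ℝ) (-r), f (max 0 (t + r)))
        + ∫⁻ t in Set.Icc (-r) Real.pi, f (max 0 (t + r)) := by
        rw [← hsplit, lintegral_union measurableSet_Icc hdisj]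
    _ = ∫⁻ t in Set.Icc (0:ℝ) (Real.pi + r), f t := by rw [h0, h1, zero_add]
    _ ≤ ∫⁻ t in Set.Icc (0:ℝ) Real.pi, f t :=
        lintegral_mono_set (Set.Icc_subset_Icc le_rfl (by linarith))

lemma key_lint (p : ℝ) (hp : 1 ≤ p) (ν : Measure ℝ) [IsFiniteMeasure ν]
    (hν0 : ν (Set.Icc (-Real.pi) 0) ≠ 0)
    (F : ℝ → ℝ → ℝ≥0∞) (hF : Measurable (Function.uncurry F)) (hF0 : ∀ s, F 0 s = 0) :
    ∫⁻ t in Set.Icc (0:ℝ) Real.pi,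
        (∫⁻ s in Set.Icc (0:ℝ) Real.pi,
          ∫⁻ r in Set.Icc (-Real.pi) (0:ℝ), F (max 0 (t + r)) s ∂ν) ^ p
      ≤ ENNReal.ofReal Real.pi ^ (p - 1) * ν (Set.Icc (-Real.pi) 0) ^ p *
          ∫⁻ t in Set.Icc (0:ℝ) Real.pi, ∫⁻ s in Set.Icc (0:ℝ) Real.pi, F t s ^ p := by
  have hp0 : (0:ℝ) < p := lt_of_lt_of_le one_pos hp
  have hπ : (0:ℝ) < Real.pi := Real.pi_pos
  have hνtop : ν (Set.Icc (-Real.pi) 0) ≠ ∞ := measure_ne_top _ _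
  have hGm : Measurable (fun q : ℝ × ℝ × ℝ => F (max 0 (q.1 + q.2.2)) q.2.1) := by
    have hc : Measurable (fun q : ℝ × ℝ × ℝ => (max 0 (q.1 + q.2.2), q.2.1)) :=
      ((continuous_const.max (continuous_fst.add continuous_snd.snd)).prodMk
        continuous_snd.fst).measurable
    exact hF.comp hc
  have hGpm : Measurable (fun q : ℝ × ℝ × ℝ => F (max 0 (q.1 + q.2.2)) q.2.1 ^ p) :=
    hGm.pow_const p
  have hΦm : Measurable (fun q : ℝ × ℝ =>
      ∫⁻ r in Set.Icc (-Real.pi) (0:ℝ), F (max 0 (q.1 + r)) q.2 ∂ν) :=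
    Measurable.lintegral_prod_right
      (hGm.comp ((measurable_fst.fst.prodMk (measurable_fst.snd.prodMk measurable_snd))))
  have hΦtm : ∀ t : ℝ, Measurable (fun s =>
      ∫⁻ r in Set.Icc (-Real.pi) (0:ℝ), F (max 0 (t + r)) s ∂ν) := fun t =>
    hΦm.comp (measurable_const.prodMk measurable_id)
  have hΦpm : Measurable (fun q : ℝ × ℝ =>
      ∫⁻ r in Set.Icc (-Real.pi) (0:ℝ), F (max 0 (q.1 + r)) q.2 ^ p ∂ν) :=
    Measurable.lintegral_prod_right
      (hGpm.comp ((measurable_fst.fst.prodMk (measurable_fst.snd.prodMk measurable_snd))))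
  have hΦptm : ∀ t : ℝ, Measurable (fun s =>
      ∫⁻ r in Set.Icc (-Real.pi) (0:ℝ), F (max 0 (t + r)) s ^ p ∂ν) := fun t =>
    hΦpm.comp (measurable_const.prodMk measurable_id)
  have hFpm : Measurable (fun q : ℝ × ℝ => F q.1 q.2 ^ p) := hF.pow_const p
  have stepa : ∀ t : ℝ,
      (∫⁻ s in Set.Icc (0:ℝ) Real.pi,
        ∫⁻ r in Set.Icc (-Real.pi) (0:ℝ), F (max 0 (t + r)) s ∂ν) ^ p
      ≤ volume (Set.Icc (0:ℝ) Real.pi) ^ (p - 1) *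
        ∫⁻ s in Set.Icc (0:ℝ) Real.pi,
          (∫⁻ r in Set.Icc (-Real.pi) (0:ℝ), F (max 0 (t + r)) s ∂ν) ^ p := fun t => by
    have := holder_pow_aux (volume.restrict (Set.Icc (0:ℝ) Real.pi)) hp
      ((hΦtm t).aemeasurable)
    simpa [Measure.restrict_apply_univ] using this
  have stepb : ∀ t s : ℝ,
      (∫⁻ r in Set.Icc (-Real.pi) (0:ℝ), F (max 0 (t + r)) s ∂ν) ^ p
      ≤ ν (Set.Icc (-Real.pi) 0) ^ (p - 1) *
        ∫⁻ r in Set.Icc (-Real.pi) (0:ℝ), F (max 0 (t + r)) s ^ p ∂ν := fun t s => by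
    have hm : Measurable (fun r => F (max 0 (t + r)) s) :=
      hGm.comp (measurable_const.prodMk (measurable_const.prodMk measurable_id))
    have := holder_pow_aux (ν.restrict (Set.Icc (-Real.pi) 0)) hp hm.aemeasurable
    simpa [Measure.restrict_apply_univ] using this
  have core : ∫⁻ t in Set.Icc (0:ℝ) Real.pi, ∫⁻ s in Set.Icc (0:ℝ) Real.pi,
        ∫⁻ r in Set.Icc (-Real.pi) (0:ℝ), F (max 0 (t + r)) s ^ p ∂ν
      ≤ ν (Set.Icc (-Real.pi) 0) *
        ∫⁻ t in Set.Icc (0:ℝ) Real.pi, ∫⁻ s in Set.Icc (0:ℝ) Real.pi, F t s ^ p := by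
    rw [lintegral_lintegral_swap hΦpm.aemeasurable]
    have hswap2 : ∀ s : ℝ, ∫⁻ t in Set.Icc (0:ℝ) Real.pi,
          ∫⁻ r in Set.Icc (-Real.pi) (0:ℝ), F (max 0 (t + r)) s ^ p ∂ν
        = ∫⁻ r in Set.Icc (-Real.pi) (0:ℝ),
            (∫⁻ t in Set.Icc (0:ℝ) Real.pi, F (max 0 (t + r)) s ^ p) ∂ν := fun s =>
      lintegral_lintegral_swap (f := fun t r => F (max 0 (t + r)) s ^ p)
        ((hGpm.comp (measurable_fst.prodMk
          (measurable_const.prodMk measurable_snd))).aemeasurable)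
    calc ∫⁻ s in Set.Icc (0:ℝ) Real.pi, ∫⁻ t in Set.Icc (0:ℝ) Real.pi,
          ∫⁻ r in Set.Icc (-Real.pi) (0:ℝ), F (max 0 (t + r)) s ^ p ∂ν
        = ∫⁻ s in Set.Icc (0:ℝ) Real.pi, ∫⁻ r in Set.Icc (-Real.pi) (0:ℝ),
            (∫⁻ t in Set.Icc (0:ℝ) Real.pi, F (max 0 (t + r)) s ^ p) ∂ν :=
          setLIntegral_congr_fun_ae measurableSet_Icc
            (Filter.Eventually.of_forall (fun s _ => hswap2 s))
      _ ≤ ∫⁻ s in Set.Icc (0:ℝ) Real.pi, ∫⁻ _ in Set.Icc (-Real.pi) (0:ℝ),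
            (∫⁻ t in Set.Icc (0:ℝ) Real.pi, F t s ^ p) ∂ν := by
          refine lintegral_mono (fun s => ?_)
          refine setLIntegral_mono' measurableSet_Icc (fun r hr => ?_)
          exact shift_lintegral_le (f := fun x => F x s ^ p)
            (by show F 0 s ^ p = 0; rw [hF0 s, ENNReal.zero_rpow_of_pos hp0]) hr
      _ = ∫⁻ s in Set.Icc (0:ℝ) Real.pi,
            (∫⁻ t in Set.Icc (0:ℝ) Real.pi, F t s ^ p) * ν (Set.Icc (-Real.pi) 0) :=
          lintegral_congr (fun s => setLIntegral_const _ _)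
      _ = (∫⁻ s in Set.Icc (0:ℝ) Real.pi,
            ∫⁻ t in Set.Icc (0:ℝ) Real.pi, F t s ^ p) * ν (Set.Icc (-Real.pi) 0) :=
          lintegral_mul_const _ (Measurable.lintegral_prod_right
            (f := fun s t => F t s ^ p)
            (hFpm.comp (measurable_snd.prodMk measurable_fst)))
      _ = ν (Set.Icc (-Real.pi) 0) *
            ∫⁻ t in Set.Icc (0:ℝ) Real.pi, ∫⁻ s in Set.Icc (0:ℝ) Real.pi, F t s ^ p := by
          rw [mul_comm]
          congr 1
          exact lintegral_lintegral_swap (f := fun s t => F t s ^ p)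
            ((hFpm.comp (measurable_snd.prodMk measurable_fst)).aemeasurable)
  have hvolπ : volume (Set.Icc (0:ℝ) Real.pi) = ENNReal.ofReal Real.pi := by
    rw [Real.volume_Icc, sub_zero]
  have hcst : ν (Set.Icc (-Real.pi) 0) ^ (p - 1) * ν (Set.Icc (-Real.pi) 0)
      = ν (Set.Icc (-Real.pi) 0) ^ p := by
    have h := ENNReal.rpow_add (p - 1) 1 hν0 hνtop
    rw [sub_add_cancel, ENNReal.rpow_one] at h
    exact h.symm
  calc ∫⁻ t in Set.Icc (0:ℝ) Real.pi,
        (∫⁻ s in Set.Icc (0:ℝ) Real.pi,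
          ∫⁻ r in Set.Icc (-Real.pi) (0:ℝ), F (max 0 (t + r)) s ∂ν) ^ p
      ≤ ∫⁻ t in Set.Icc (0:ℝ) Real.pi, volume (Set.Icc (0:ℝ) Real.pi) ^ (p - 1) *
          ∫⁻ s in Set.Icc (0:ℝ) Real.pi,
            (∫⁻ r in Set.Icc (-Real.pi) (0:ℝ), F (max 0 (t + r)) s ∂ν) ^ p :=
        lintegral_mono stepa
    _ ≤ ∫⁻ t in Set.Icc (0:ℝ) Real.pi, volume (Set.Icc (0:ℝ) Real.pi) ^ (p - 1) *
          ∫⁻ s in Set.Icc (0:ℝ) Real.pi, (ν (Set.Icc (-Real.pi) 0) ^ (p - 1) *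
            ∫⁻ r in Set.Icc (-Real.pi) (0:ℝ), F (max 0 (t + r)) s ^ p ∂ν) :=
        lintegral_mono (fun t => mul_le_mul_right
          (lintegral_mono (fun s => stepb t s)) _)
    _ = volume (Set.Icc (0:ℝ) Real.pi) ^ (p - 1) * (ν (Set.Icc (-Real.pi) 0) ^ (p - 1) *
          ∫⁻ t in Set.Icc (0:ℝ) Real.pi, ∫⁻ s in Set.Icc (0:ℝ) Real.pi,
            ∫⁻ r in Set.Icc (-Real.pi) (0:ℝ), F (max 0 (t + r)) s ^ p ∂ν) := by
        have h1 : ∀ t : ℝ, ∫⁻ s in Set.Icc (0:ℝ) Real.pi, (ν (Set.Icc (-Real.pi) 0) ^ (p - 1) *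
              ∫⁻ r in Set.Icc (-Real.pi) (0:ℝ), F (max 0 (t + r)) s ^ p ∂ν)
            = ν (Set.Icc (-Real.pi) 0) ^ (p - 1) * ∫⁻ s in Set.Icc (0:ℝ) Real.pi,
              ∫⁻ r in Set.Icc (-Real.pi) (0:ℝ), F (max 0 (t + r)) s ^ p ∂ν := fun t =>
          lintegral_const_mul _ (hΦptm t)
        simp only [h1]
        rw [lintegral_const_mul _ (Measurable.const_mul
          (Measurable.lintegral_prod_right (f := fun t s =>
            ∫⁻ r in Set.Icc (-Real.pi) (0:ℝ), F (max 0 (t + r)) s ^ p ∂ν) hΦpm) _),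
          lintegral_const_mul _ (Measurable.lintegral_prod_right (f := fun t s =>
            ∫⁻ r in Set.Icc (-Real.pi) (0:ℝ), F (max 0 (t + r)) s ^ p ∂ν) hΦpm)]
    _ ≤ volume (Set.Icc (0:ℝ) Real.pi) ^ (p - 1) * (ν (Set.Icc (-Real.pi) 0) ^ (p - 1) *
          (ν (Set.Icc (-Real.pi) 0) *
            ∫⁻ t in Set.Icc (0:ℝ) Real.pi, ∫⁻ s in Set.Icc (0:ℝ) Real.pi, F t s ^ p)) :=
        mul_le_mul_right (mul_le_mul_right core _) _
    _ = ENNReal.ofReal Real.pi ^ (p - 1) * ν (Set.Icc (-Real.pi) 0) ^ p *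
          ∫⁻ t in Set.Icc (0:ℝ) Real.pi, ∫⁻ s in Set.Icc (0:ℝ) Real.pi, F t s ^ p := by
        rw [hvolπ, ← hcst]; ring

set_option maxHeartbeats 2000000 in
/-- **Joint `p`-admissibility of the pair `(K_D, φ)` for the nilpotent left shift.**
Let `1 ≤ p < ∞`, let `ν` be a finite positive Borel measure on `[-π,0]`, and let
`u : [0,π] × [0,π] → ℝ` be continuous with `u(0,s) = 0` for all `s ∈ [0,π]`.  Then
`∫₀^π (∫₀^π ∫_{[-π,0]} |u(max(0,t+r),s)| dν(r) ds)^p dt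
  ≤ π^{p-1} ν([-π,0])^p ∫₀^π ∫₀^π |u(t,s)|^p ds dt`. -/
theorem stmt_17 (p : ℝ) (hp : 1 ≤ p) (ν : Measure ℝ) [IsFiniteMeasure ν]
    (u : ℝ → ℝ → ℝ)
    (hu : ContinuousOn (Function.uncurry u) (Set.Icc 0 Real.pi ×ˢ Set.Icc 0 Real.pi))
    (hu0 : ∀ s ∈ Set.Icc (0 : ℝ) Real.pi, u 0 s = 0) :
    ∫ t in Set.Icc (0 : ℝ) Real.pi,
        (∫ s in Set.Icc (0 : ℝ) Real.pi,
            ∫ r in Set.Icc (-Real.pi) (0 : ℝ), |u (max 0 (t + r)) s| ∂ν) ^ p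
      ≤ Real.pi ^ (p - 1) * (ν (Set.Icc (-Real.pi) 0)).toReal ^ p *
          ∫ t in Set.Icc (0 : ℝ) Real.pi,
            ∫ s in Set.Icc (0 : ℝ) Real.pi, |u t s| ^ p := by
  have hπ : (0:ℝ) < Real.pi := Real.pi_pos
  have hp0 : (0:ℝ) < p := lt_of_lt_of_le one_pos hp
  set A := Set.Icc (0:ℝ) Real.pi with hAdef
  set R := Set.Icc (-Real.pi) (0:ℝ) with hRdef
  -- trivial case ν R = 0
  by_cases hν0 : ν R = 0
  · have hres : ν.restrict R = 0 := Measure.restrict_eq_zero.mpr hν0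
    have : ∀ t : ℝ, (∫ s in A, ∫ r in R, |u (max 0 (t + r)) s| ∂ν) ^ p = 0 := fun t => by
      simp [hres, Real.zero_rpow (ne_of_gt hp0)]
    simp only [this, integral_zero, hν0]
    simp [Real.zero_rpow (ne_of_gt hp0)]
  -- setup: clamp u to a globally continuous function w
  have hνtop : ν R ≠ ∞ := measure_ne_top ν R
  set proj : ℝ → ℝ := fun x => min Real.pi (max 0 x) with hprojdef
  have hprojc : Continuous proj := continuous_const.min (continuous_const.max continuous_id)
  have hprojmem : ∀ x, proj x ∈ A :=
    fun x => ⟨le_min hπ.le (le_max_left _ _), min_le_left _ _⟩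
  have hprojeq : ∀ x ∈ A, proj x = x := fun x hx => by
    simp only [hprojdef]; rw [max_eq_right hx.1, min_eq_right hx.2]
  set w : ℝ → ℝ → ℝ := fun t s => u (proj t) (proj s) with hwdef
  have hw : Continuous (Function.uncurry w) := by
    have : Function.uncurry w =
        (Function.uncurry u) ∘ (fun q : ℝ × ℝ => (proj q.1, proj q.2)) := rfl
    rw [this]
    exact hu.comp_continuous ((hprojc.comp continuous_fst).prodMk (hprojc.comp continuous_snd))
      (fun q => ⟨hprojmem _, hprojmem _⟩)
  have hw0 : ∀ s, w 0 s = 0 := fun s => by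
    have h0 : proj 0 = 0 := by simp [hprojdef, hπ.le]
    simp only [hwdef, h0]
    exact hu0 _ (hprojmem s)
  have hwu : ∀ t ∈ A, ∀ s ∈ A, w t s = u t s := fun t ht s hs => by
    simp only [hwdef, hprojeq t ht, hprojeq s hs]
  have hmax : ∀ t ∈ A, ∀ r ∈ R, max 0 (t + r) ∈ A := fun t ht r hr =>
    ⟨le_max_left _ _, max_le hπ.le (by linarith [ht.2, hr.2])⟩
  -- rewrite goal in terms of w
  have hL : ∫ t in A, (∫ s in A, ∫ r in R, |u (max 0 (t + r)) s| ∂ν) ^ p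
      = ∫ t in A, (∫ s in A, ∫ r in R, |w (max 0 (t + r)) s| ∂ν) ^ p := by
    refine setIntegral_congr_fun measurableSet_Icc (fun t ht => ?_)
    congr 1
    refine setIntegral_congr_fun measurableSet_Icc (fun s hs => ?_)
    refine setIntegral_congr_fun measurableSet_Icc (fun r hr => ?_)
    rw [hwu _ (hmax t ht r hr) _ hs]
  have hRr : ∫ t in A, ∫ s in A, |u t s| ^ p = ∫ t in A, ∫ s in A, |w t s| ^ p := by
    refine setIntegral_congr_fun measurableSet_Icc (fun t ht => ?_)
    refine setIntegral_congr_fun measurableSet_Icc (fun s hs => ?_)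
    rw [hwu t ht s hs]
  rw [hL, hRr]
  clear hL hRr hu hu0 hwu
  -- ENNReal-valued versions
  set H : ℝ → ℝ → ℝ≥0∞ := fun t s => ENNReal.ofReal |w t s| with hHdef
  set G : ℝ → ℝ → ℝ → ℝ≥0∞ := fun t s r => H (max 0 (t + r)) s with hGdef
  have hHm : Measurable (fun q : ℝ × ℝ => H q.1 q.2) :=
    ENNReal.measurable_ofReal.comp (continuous_abs.comp hw).measurable
  have hGm : Measurable (fun q : ℝ × ℝ × ℝ => G q.1 q.2.1 q.2.2) := by
    have hc : Measurable (fun q : ℝ × ℝ × ℝ => (max 0 (q.1 + q.2.2), q.2.1)) :=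
      ((continuous_const.max (continuous_fst.add continuous_snd.snd)).prodMk
        continuous_snd.fst).measurable
    exact hHm.comp hc
  -- uniform bound
  obtain ⟨M, hM⟩ := (isCompact_Icc.prod isCompact_Icc).exists_bound_of_continuousOn
    hw.continuousOn
  have hM0 : 0 ≤ M := le_trans (norm_nonneg _) (hM (0, 0) ⟨⟨le_rfl, hπ.le⟩, ⟨le_rfl, hπ.le⟩⟩)
  have hHle : ∀ t ∈ A, ∀ s ∈ A, H t s ≤ ENNReal.ofReal M := fun t ht s hs => by
    refine ENNReal.ofReal_le_ofReal ?_
    simpa [Real.norm_eq_abs] using hM (t, s) ⟨ht, hs⟩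
  -- measurability of iterated lintegrals
  have hΦm : Measurable (fun q : ℝ × ℝ => ∫⁻ r in R, G q.1 q.2 r ∂ν) := by
    refine Measurable.lintegral_prod_right ?_
    exact hGm.comp ((measurable_fst.fst.prodMk (measurable_fst.snd.prodMk measurable_snd)))
  have hΦtm : ∀ t : ℝ, Measurable (fun s => ∫⁻ r in R, G t s r ∂ν) := fun t =>
    hΦm.comp (measurable_const.prodMk measurable_id)
  have hΨm : Measurable (fun t => ∫⁻ s in A, ∫⁻ r in R, G t s r ∂ν) :=
    Measurable.lintegral_prod_right hΦm
  -- finiteness bounds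
  have hΦle : ∀ t ∈ A, ∀ s ∈ A, ∫⁻ r in R, G t s r ∂ν ≤ ENNReal.ofReal M * ν R :=
    fun t ht s hs => by
      calc ∫⁻ r in R, G t s r ∂ν ≤ ∫⁻ _ in R, ENNReal.ofReal M ∂ν :=
            setLIntegral_mono' measurableSet_Icc
              (fun r hr => hHle _ (hmax t ht r hr) s hs)
        _ = ENNReal.ofReal M * ν R := setLIntegral_const R _
  have hc1 : ENNReal.ofReal M * ν R ≠ ∞ := ENNReal.mul_ne_top ENNReal.ofReal_ne_top hνtop
  have hΨle : ∀ t ∈ A, (∫⁻ s in A, ∫⁻ r in R, G t s r ∂ν)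
      ≤ ENNReal.ofReal M * ν R * volume A := fun t ht => by
    calc (∫⁻ s in A, ∫⁻ r in R, G t s r ∂ν) ≤ ∫⁻ _ in A, ENNReal.ofReal M * ν R :=
          setLIntegral_mono' measurableSet_Icc (fun s hs => hΦle t ht s hs)
      _ = ENNReal.ofReal M * ν R * volume A := setLIntegral_const A _
  have hvolA : volume A ≠ ∞ := by
    rw [hAdef, Real.volume_Icc]; exact ENNReal.ofReal_ne_top
  have hc2 : ENNReal.ofReal M * ν R * volume A ≠ ∞ := ENNReal.mul_ne_top hc1 hvolA
  -- Bochner-to-lintegral conversion, LHS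
  have step1 : ∀ t s : ℝ, ∫ r in R, |w (max 0 (t + r)) s| ∂ν
      = (∫⁻ r in R, G t s r ∂ν).toReal := fun t s => by
    rw [integral_eq_lintegral_of_nonneg_ae
      (Filter.Eventually.of_forall (fun r => abs_nonneg _))
      (Continuous.aestronglyMeasurable (by fun_prop))]
  have step2 : ∀ t ∈ A, ∫ s in A, ∫ r in R, |w (max 0 (t + r)) s| ∂ν
      = (∫⁻ s in A, ∫⁻ r in R, G t s r ∂ν).toReal := fun t ht => by
    simp only [step1]
    rw [integral_eq_lintegral_of_nonneg_ae
      (Filter.Eventually.of_forall (fun s => ENNReal.toReal_nonneg))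
      ((hΦtm t).ennreal_toReal.aestronglyMeasurable)]
    congr 1
    refine setLIntegral_congr_fun_ae measurableSet_Icc (Filter.Eventually.of_forall
      (fun s hs => ?_))
    exact ENNReal.ofReal_toReal (ne_top_of_le_ne_top hc1 (hΦle t ht s hs))
  have step3 : ∫ t in A, (∫ s in A, ∫ r in R, |w (max 0 (t + r)) s| ∂ν) ^ p
      = (∫⁻ t in A, (∫⁻ s in A, ∫⁻ r in R, G t s r ∂ν) ^ p).toReal := by
    rw [setIntegral_congr_fun measurableSet_Icc (fun t ht => by rw [step2 t ht])]
    rw [integral_eq_lintegral_of_nonneg_ae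
      (Filter.Eventually.of_forall (fun t => Real.rpow_nonneg ENNReal.toReal_nonneg p))
      ((hΨm.ennreal_toReal.pow_const p).aestronglyMeasurable)]
    congr 1
    refine setLIntegral_congr_fun_ae measurableSet_Icc (Filter.Eventually.of_forall
      (fun t ht => ?_))
    rw [← ENNReal.ofReal_rpow_of_nonneg ENNReal.toReal_nonneg hp0.le,
      ENNReal.ofReal_toReal (ne_top_of_le_ne_top hc2 (hΨle t ht))]
  -- Bochner-to-lintegral conversion, RHS
  have hHpm : Measurable (fun q : ℝ × ℝ => H q.1 q.2 ^ p) := hHm.pow_const p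
  have hHptm : ∀ t, Measurable (fun s => H t s ^ p) := fun t =>
    hHpm.comp (measurable_const.prodMk measurable_id)
  have hMp : ENNReal.ofReal M ^ p ≠ ∞ :=
    ENNReal.rpow_ne_top_of_nonneg hp0.le ENNReal.ofReal_ne_top
  have hHple : ∀ t ∈ A, ∫⁻ s in A, H t s ^ p ≤ ENNReal.ofReal M ^ p * volume A :=
    fun t ht => by
      calc ∫⁻ s in A, H t s ^ p ≤ ∫⁻ _ in A, ENNReal.ofReal M ^ p :=
            setLIntegral_mono' measurableSet_Icc
              (fun s hs => ENNReal.rpow_le_rpow (hHle t ht s hs) hp0.le)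
        _ = ENNReal.ofReal M ^ p * volume A := setLIntegral_const A _
  have hc3 : ENNReal.ofReal M ^ p * volume A ≠ ∞ := ENNReal.mul_ne_top hMp hvolA
  have step4 : ∀ t : ℝ, ∫ s in A, |w t s| ^ p = (∫⁻ s in A, H t s ^ p).toReal := fun t => by
    rw [integral_eq_lintegral_of_nonneg_ae
      (Filter.Eventually.of_forall (fun s => Real.rpow_nonneg (abs_nonneg _) p))
      (Continuous.aestronglyMeasurable
        (Continuous.rpow_const (by fun_prop) (fun s => Or.inr hp0.le)))]
    congr 1
    refine setLIntegral_congr_fun_ae measurableSet_Icc (Filter.Eventually.of_forall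
      (fun s hs => ?_))
    rw [← ENNReal.ofReal_rpow_of_nonneg (abs_nonneg _) hp0.le]
  have step5 : ∫ t in A, ∫ s in A, |w t s| ^ p
      = (∫⁻ t in A, ∫⁻ s in A, H t s ^ p).toReal := by
    rw [setIntegral_congr_fun measurableSet_Icc (fun t _ => step4 t)]
    rw [integral_eq_lintegral_of_nonneg_ae
      (Filter.Eventually.of_forall (fun t => ENNReal.toReal_nonneg))
      (((Measurable.lintegral_prod_right
        (f := fun t s => H t s ^ p) hHpm).ennreal_toReal).aestronglyMeasurable)]
    congr 1
    refine setLIntegral_congr_fun_ae measurableSet_Icc (Filter.Eventually.of_forall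
      (fun t ht => ?_))
    exact ENNReal.ofReal_toReal (ne_top_of_le_ne_top hc3 (hHple t ht))
  have hRlint : (∫⁻ t in A, ∫⁻ s in A, H t s ^ p) ≤ ENNReal.ofReal M ^ p * volume A * volume A := by
    calc (∫⁻ t in A, ∫⁻ s in A, H t s ^ p) ≤ ∫⁻ _ in A, ENNReal.ofReal M ^ p * volume A :=
          setLIntegral_mono' measurableSet_Icc (fun t ht => hHple t ht)
      _ = ENNReal.ofReal M ^ p * volume A * volume A := setLIntegral_const A _
  have hRfin : (∫⁻ t in A, ∫⁻ s in A, H t s ^ p) ≠ ∞ :=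
    ne_top_of_le_ne_top (ENNReal.mul_ne_top hc3 hvolA) hRlint
  -- apply the key lintegral inequality
  have hH0 : ∀ s : ℝ, H 0 s = 0 := fun s => by
    simp [hHdef, hw0 s]
  have hHum : Measurable (Function.uncurry H) :=
    ENNReal.measurable_ofReal.comp (continuous_abs.comp hw).measurable
  have key := key_lint p hp ν hν0 H hHum hH0
  rw [step3, step5]
  have hfin : ENNReal.ofReal Real.pi ^ (p - 1) * ν R ^ p
      * (∫⁻ t in A, ∫⁻ s in A, H t s ^ p) ≠ ∞ :=
    ENNReal.mul_ne_top (ENNReal.mul_ne_top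
      (ENNReal.rpow_ne_top_of_nonneg (by linarith) ENNReal.ofReal_ne_top)
      (ENNReal.rpow_ne_top_of_nonneg hp0.le hνtop)) hRfin
  calc (∫⁻ t in A, (∫⁻ s in A, ∫⁻ r in R, G t s r ∂ν) ^ p).toReal
      ≤ (ENNReal.ofReal Real.pi ^ (p - 1) * ν R ^ p
          * ∫⁻ t in A, ∫⁻ s in A, H t s ^ p).toReal := ENNReal.toReal_mono hfin key
    _ = Real.pi ^ (p - 1) * (ν R).toReal ^ p
          * (∫⁻ t in A, ∫⁻ s in A, H t s ^ p).toReal := by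
        rw [ENNReal.toReal_mul, ENNReal.toReal_mul, ← ENNReal.toReal_rpow,
          ← ENNReal.toReal_rpow, ENNReal.toReal_ofReal hπ.le]
end

section
/- Let X and ∂X be complex Banach spaces, λ₀ > 0, and α ∈ (0,1]. For each λ > λ₀ let N_λ ⊆ X be a linear subspace and L_λ : ∂X → X a bounded linear operator with range exactly N_λ, and let L be a linear map, defined on a subspace of X containing all N_λ, with values in ∂X, such that L(L_λ x) = x for every λ > λ₀ and every x ∈ ∂X. Then the following are equivalent: (a) for every x ∈ ∂X, sup_{λ>λ₀} λ^α·‖L_λ x‖ < ∞; (b) there exists M > 0 such that ‖Ly‖ ≥ M·λ^α·‖y‖ for all λ > λ₀ and all y ∈ N_λ. -/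
/-- **Characterization of the decay of Dirichlet operators.**
Let `X`, `∂X` be complex Banach spaces, `λ₀ > 0`, `α ∈ (0,1]`.  For each `λ > λ₀` let
`N_λ ⊆ X` be a subspace and `L_λ ∈ L(∂X, X)` with range exactly `N_λ`, and let `L` be a
linear map defined on a subspace of `X` containing all `N_λ`, with values in `∂X`, such
that `L (L_λ x) = x` for all `λ > λ₀` and `x ∈ ∂X`.  Then the following are equivalent:
(a) for every `x ∈ ∂X`, `sup_{λ>λ₀} λ^α ‖L_λ x‖ < ∞`;
(b) there exists `M > 0` with `‖L y‖ ≥ M λ^α ‖y‖` for all `λ > λ₀` and `y ∈ N_λ`. -/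
theorem stmt_18 {X dX : Type*} [NormedAddCommGroup X] [NormedSpace ℂ X] [CompleteSpace X]
    [NormedAddCommGroup dX] [NormedSpace ℂ dX] [CompleteSpace dX]
    (lam0 : ℝ) (hlam0 : 0 < lam0) (α : ℝ) (hα1 : 0 < α) (hα2 : α ≤ 1)
    (N : ℝ → Submodule ℂ X) (Ll : ℝ → dX →L[ℂ] X)
    (Dm : Submodule ℂ X) (L : Dm →ₗ[ℂ] dX)
    (hrange : ∀ l : ℝ, lam0 < l → Set.range (Ll l) = (N l : Set X))
    (hND : ∀ l : ℝ, lam0 < l → N l ≤ Dm)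
    (hLLl : ∀ l : ℝ, lam0 < l → ∀ x : dX, ∀ h : Ll l x ∈ Dm, L ⟨Ll l x, h⟩ = x) :
    (∀ x : dX, ∃ C : ℝ, ∀ l : ℝ, lam0 < l → l ^ α * ‖Ll l x‖ ≤ C) ↔
      (∃ M : ℝ, 0 < M ∧ ∀ l : ℝ, lam0 < l → ∀ y : Dm, (y : X) ∈ N l →
        M * (l ^ α * ‖(y : X)‖) ≤ ‖L y‖) := by
  constructor
  · intro ha
    -- uniform boundedness
    set g : {l : ℝ // lam0 < l} → dX →L[ℂ] X := fun l => (l.1 ^ α : ℝ) • Ll l.1 with hg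
    have hpt : ∀ x : dX, ∃ C : ℝ, ∀ i, ‖g i x‖ ≤ C := by
      intro x
      obtain ⟨C, hC⟩ := ha x
      refine ⟨C, fun i => ?_⟩
      have hl : (0:ℝ) < i.1 := hlam0.trans i.2
      have : ‖g i x‖ = i.1 ^ α * ‖Ll i.1 x‖ := by
        simp [hg, norm_smul, abs_of_nonneg (Real.rpow_nonneg hl.le α)]
      rw [this]; exact hC i.1 i.2
    obtain ⟨C', hC'⟩ := banach_steinhaus hpt
    set M : ℝ := 1 / (max C' 1) with hM
    have hmax : (0:ℝ) < max C' 1 := lt_of_lt_of_le one_pos (le_max_right _ _)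
    refine ⟨M, by positivity, fun l hl y hy => ?_⟩
    have hy' : (y : X) ∈ Set.range (Ll l) := by rw [hrange l hl]; exact hy
    obtain ⟨x₀, hx₀⟩ := hy'
    have hmem : Ll l x₀ ∈ Dm := by rw [hx₀]; exact y.2
    have hLy : L y = x₀ := by
      have := hLLl l hl x₀ hmem
      have heq : (⟨Ll l x₀, hmem⟩ : Dm) = y := Subtype.ext hx₀
      rwa [heq] at this
    have hlpos : (0:ℝ) < l := hlam0.trans hl
    have key : l ^ α * ‖(y : X)‖ ≤ C' * ‖x₀‖ := by
      have h1 : ‖g ⟨l, hl⟩ x₀‖ ≤ C' * ‖x₀‖ := (g ⟨l, hl⟩).le_of_opNorm_le (hC' ⟨l, hl⟩) x₀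
      have h2 : ‖g ⟨l, hl⟩ x₀‖ = l ^ α * ‖(y : X)‖ := by
        simp [hg, norm_smul, abs_of_nonneg (Real.rpow_nonneg hlpos.le α), hx₀]
      rwa [h2] at h1
    have key2 : l ^ α * ‖(y : X)‖ ≤ max C' 1 * ‖L y‖ := by
      rw [hLy]
      exact key.trans (mul_le_mul_of_nonneg_right (le_max_left _ _) (norm_nonneg _))
    rw [hM, one_div, inv_mul_le_iff₀ hmax]
    exact key2
  · rintro ⟨M, hM, hb⟩ x
    refine ⟨‖x‖ / M, fun l hl => ?_⟩
    have hmem : Ll l x ∈ Dm := by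
      apply hND l hl
      have : Ll l x ∈ Set.range (Ll l) := ⟨x, rfl⟩
      rwa [hrange l hl] at this
    have hN : ((⟨Ll l x, hmem⟩ : Dm) : X) ∈ N l := by
      have : Ll l x ∈ Set.range (Ll l) := ⟨x, rfl⟩
      rwa [hrange l hl] at this
    have := hb l hl ⟨Ll l x, hmem⟩ hN
    rw [hLLl l hl x hmem] at this
    rw [le_div_iff₀ hM, mul_comm]
    exact this
end
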